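/- arXiv:2501.17385 — 4 statements merged into one kernel-verified Lean document; each statement's English description precedes it below -/
import Mathlib

section
/- Let G be a resource allocation game with network (𝓒,𝓝) and mechanism f, let a^ne and a^opt be any two action profiles, and let θ : 𝓘 → ℝ be constructed from (a^ne, a^opt) as in the context. Then for every class index j ∈ {1,…,k}: Σ_{i∈𝓒_j} U_i(a^ne) = Σ_{t∈𝓘} (a_j + x_j) f_j(A_{t,j}) θ(t), and Σ_{i∈𝓒_j} U_i(a^opt_i, a^ne_{-i}) = Σ_{t∈𝓘} [x_j f_j(A_{t,j}) + b_j f_j(A_{t,j}+1)] θ(t). -/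
open Finset

noncomputable section

/-- A resource allocation game with `n` agents: resources `Fin m`, nonnegative
resource values `v`, and nonempty finite action sets consisting of subsets of resources. -/
structure RAGame (n : ℕ) where
  m : ℕ
  v : Fin m → ℝ
  v_nonneg : ∀ r, 0 ≤ v r
  act : Fin n → Finset (Finset (Fin m))
  act_nonempty : ∀ i, (act i).Nonempty

namespace RAGame

variable {n : ℕ}

/-- the number of agents in `S` selecting resource `r` at profile `a` -/
def cnt (G : RAGame n) (a : Fin n → Finset (Fin G.m)) (S : Finset (Fin n)) (r : Fin G.m) : ℕ :=
  (S.filter fun i => r ∈ a i).card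

/-- `a` is an action profile of the game -/
def IsProfile (G : RAGame n) (a : Fin n → Finset (Fin G.m)) : Prop := ∀ i, a i ∈ G.act i

/-- the welfare `W(a) = ∑ r, v r * w (|a|_r)` -/
def welf (G : RAGame n) (w : ℕ → ℝ) (a : Fin n → Finset (Fin G.m)) : ℝ :=
  ∑ r, G.v r * w (G.cnt a Finset.univ r)

end RAGame

/-- a basis function: `w 0 = 0` and `w j > 0` for `1 ≤ j ≤ n` -/
def IsBasis (n : ℕ) (w : ℕ → ℝ) : Prop :=
  w 0 = 0 ∧ ∀ j, 1 ≤ j → j ≤ n → 0 < w j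

/-- An information network on `n` agents partitioned into `k` (nonempty) classes, namely
the fibers of `cls` (`cls` surjective says every class is nonempty), where each agent of
class `j` observes exactly the agents in `Nb j`;  `Nb j` contains the class `j` itself
and is a union of classes. -/
structure Network (n k : ℕ) where
  cls : Fin n → Fin k
  Nb : Fin k → Finset (Fin n)
  cls_surj : Function.Surjective cls
  mem_Nb : ∀ i, i ∈ Nb (cls i)
  Nb_union : ∀ (j : Fin k) (i i' : Fin n), cls i = cls i' → i ∈ Nb j → i' ∈ Nb j

namespace Network

variable {n k : ℕ}

/-- the class `𝓒_j` as a finset of agents -/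
def classSet (net : Network n k) (j : Fin k) : Finset (Fin n) :=
  Finset.univ.filter fun i => net.cls i = j

/-- `κ j = |𝓒_j|` -/
def κ (net : Network n k) (j : Fin k) : ℕ := (net.classSet j).card

end Network

/-- `f` is a utility mechanism for the network: `f_j 0 = f_j (|𝓝_j|+1) = 0` -/
def IsMech {n k : ℕ} (net : Network n k) (f : Fin k → ℕ → ℝ) : Prop :=
  ∀ j, f j 0 = 0 ∧ f j ((net.Nb j).card + 1) = 0

namespace RAGame

variable {n k : ℕ}

/-- the utility `U_i(a) = ∑_{r ∈ a i} v r * f_{cls i} (|a|_r^{𝓝_{cls i}})` -/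
def util (G : RAGame n) (net : Network n k) (f : Fin k → ℕ → ℝ)
    (a : Fin n → Finset (Fin G.m)) (i : Fin n) : ℝ :=
  ∑ r ∈ a i, G.v r * f (net.cls i) (G.cnt a (net.Nb (net.cls i)) r)

/-- `a` is a pure Nash equilibrium -/
def IsNash (G : RAGame n) (net : Network n k) (f : Fin k → ℕ → ℝ)
    (a : Fin n → Finset (Fin G.m)) : Prop :=
  G.IsProfile a ∧ ∀ (i : Fin n), ∀ b ∈ G.act i,
    G.util net f (Function.update a i b) i ≤ G.util net f a i

end RAGame

/-- the defining condition of the class `𝓖`: some profile has positive welfare -/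
def GoodGame {n : ℕ} (G : RAGame n) (w : ℕ → ℝ) : Prop :=
  ∃ a, G.IsProfile a ∧ 0 < G.welf w a

/-- (worst pure-equilibrium welfare) / (best welfare) of a single game -/
def gameRatio {n k : ℕ} (G : RAGame n) (w : ℕ → ℝ) (net : Network n k)
    (f : Fin k → ℕ → ℝ) : ℝ :=
  sInf {x | ∃ a, G.IsNash net f a ∧ x = G.welf w a} /
    sSup {x | ∃ a, G.IsProfile a ∧ x = G.welf w a}

/-- the price of anarchy `PoA(f, w, 𝓒, 𝓝)` -/
def PoA (n : ℕ) {k : ℕ} (w : ℕ → ℝ) (net : Network n k) (f : Fin k → ℕ → ℝ) : ℝ :=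
  sInf {q | ∃ G : RAGame n, GoodGame G w ∧ (∃ a, G.IsNash net f a) ∧
    q = gameRatio G w net f}

/-- index tuples `t = ((a_j, x_j, b_j))_{j ∈ [k]}` (components of size at most `n`) -/
abbrev Idx (n k : ℕ) := Fin k → Fin (n + 1) × Fin (n + 1) × Fin (n + 1)

section IdxDefs

variable {n k : ℕ}

def aI (t : Idx n k) (j : Fin k) : ℕ := ((t j).1 : ℕ)
def xI (t : Idx n k) (j : Fin k) : ℕ := ((t j).2.1 : ℕ)
def bI (t : Idx n k) (j : Fin k) : ℕ := ((t j).2.2 : ℕ)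

/-- `A_t = ∑_j (a_j + x_j)` -/
def AtI (t : Idx n k) : ℕ := ∑ j, (aI t j + xI t j)

/-- `B_t = ∑_j (b_j + x_j)` -/
def BtI (t : Idx n k) : ℕ := ∑ j, (bI t j + xI t j)

/-- `A_{t,j} = ∑_{l : 𝓒_l ⊆ 𝓝_j} (a_l + x_l)` -/
def Atj (net : Network n k) (t : Idx n k) (j : Fin k) : ℕ :=
  ∑ l ∈ Finset.univ.filter (fun l => net.classSet l ⊆ net.Nb j), (aI t l + xI t l)

end IdxDefs

/-- the index set `𝓘` -/
def Iset (n k : ℕ) (κ : Fin k → ℕ) : Finset (Idx n k) :=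
  Finset.univ.filter fun t =>
    (∀ j, aI t j + xI t j + bI t j ≤ κ j) ∧
    1 ≤ ∑ j, (aI t j + xI t j + bI t j) ∧
    ∑ j, (aI t j + xI t j + bI t j) ≤ n

/-- the reduced index set `𝓘_R` -/
def IRset (n k : ℕ) (κ : Fin k → ℕ) : Finset (Idx n k) :=
  (Iset n k κ).filter fun t =>
    ∀ j, aI t j * xI t j * bI t j = 0 ∨ aI t j + xI t j + bI t j = κ j

section LP

variable {n k : ℕ}

/-- the primal LP objective `∑_{t ∈ 𝓘} w(B_t) θ(t)` for `θ : 𝓘 → ℝ` -/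
def primalObj (n k : ℕ) (κ : Fin k → ℕ) (w : ℕ → ℝ)
    (θ : {t : Idx n k // t ∈ Iset n k κ} → ℝ) : ℝ :=
  ∑ t ∈ (Iset n k κ).attach, w (BtI t.1) * θ t

/-- feasibility for the primal LP -/
def PrimalFeasible (n k : ℕ) (net : Network n k) (w : ℕ → ℝ) (f : Fin k → ℕ → ℝ)
    (θ : {t : Idx n k // t ∈ Iset n k net.κ} → ℝ) : Prop :=
  (∀ t, 0 ≤ θ t) ∧
  (∀ j : Fin k, 0 ≤ ∑ t ∈ (Iset n k net.κ).attach,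
      ((aI t.1 j : ℝ) * f j (Atj net t.1 j) - (bI t.1 j : ℝ) * f j (Atj net t.1 j + 1)) * θ t) ∧
  ∑ t ∈ (Iset n k net.κ).attach, w (AtI t.1) * θ t = 1

/-- the set of primal objective values at feasible points; `W* = sSup` of this set -/
def PrimalVals (n k : ℕ) (net : Network n k) (w : ℕ → ℝ) (f : Fin k → ℕ → ℝ) : Set ℝ :=
  {x | ∃ θ, PrimalFeasible n k net w f θ ∧ x = primalObj n k net.κ w θ}

/-- the dual LP constraint associated to index `t` -/
def DualConstr (net : Network n k) (w : ℕ → ℝ) (f : Fin k → ℕ → ℝ)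
    (lam : Fin k → ℝ) (μ : ℝ) (t : Idx n k) : Prop :=
  w (BtI t) +
      ∑ j, lam j * ((aI t j : ℝ) * f j (Atj net t j) - (bI t j : ℝ) * f j (Atj net t j + 1))
    ≤ μ * w (AtI t)

/-- the set of dual-feasible values `μ`; `V* = sInf` of this set -/
def DualSet (n k : ℕ) (net : Network n k) (w : ℕ → ℝ) (f : Fin k → ℕ → ℝ) : Set ℝ :=
  {μ | ∃ lam : Fin k → ℝ, (∀ j, 0 ≤ lam j) ∧ ∀ t ∈ IRset n k net.κ, DualConstr net w f lam μ t}

/-- feasibility for the LP deriving the optimal mechanism (`λ` folded into `f`) -/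
def DesignFeas (n k : ℕ) (net : Network n k) (w : ℕ → ℝ) (f : Fin k → ℕ → ℝ) (μ : ℝ) : Prop :=
  IsMech net f ∧ ∀ t ∈ IRset n k net.κ,
    w (BtI t) + ∑ j, ((aI t j : ℝ) * f j (Atj net t j) - (bI t j : ℝ) * f j (Atj net t j + 1))
      ≤ μ * w (AtI t)

end LP

section Theta

variable {n k : ℕ}

/-- `𝓡(t)`: the resources whose selection signature at `(a^ne, a^opt)` is `t` -/
def Rt (G : RAGame n) (net : Network n k) (ane aopt : Fin n → Finset (Fin G.m))
    (t : Idx n k) : Finset (Fin G.m) :=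
  Finset.univ.filter fun r =>
    ∀ j : Fin k,
      G.cnt ane (net.classSet j) r = aI t j + xI t j ∧
      G.cnt aopt (net.classSet j) r = bI t j + xI t j ∧
      ((net.classSet j).filter fun i => r ∈ ane i ∧ r ∈ aopt i).card = xI t j

/-- `θ(t) = ∑_{r ∈ 𝓡(t)} v r` -/
def θof (G : RAGame n) (net : Network n k) (ane aopt : Fin n → Finset (Fin G.m))
    (t : Idx n k) : ℝ :=
  ∑ r ∈ Rt G net ane aopt t, G.v r

end Theta

section Blind

variable {n : ℕ}

/-- utility in the blind network: blind agents (members of `B`) observe only themselves -/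
def blindUtil (G : RAGame n) (B : Finset (Fin n)) (fbl : ℝ) (fnbl : ℕ → ℝ)
    (a : Fin n → Finset (Fin G.m)) (i : Fin n) : ℝ :=
  if i ∈ B then ∑ r ∈ a i, G.v r * fbl
  else ∑ r ∈ a i, G.v r * fnbl (G.cnt a Finset.univ r)

/-- pure Nash equilibrium in the blind network -/
def IsBlindNash (G : RAGame n) (B : Finset (Fin n)) (fbl : ℝ) (fnbl : ℕ → ℝ)
    (a : Fin n → Finset (Fin G.m)) : Prop :=
  G.IsProfile a ∧ ∀ (i : Fin n), ∀ b ∈ G.act i,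
    blindUtil G B fbl fnbl (Function.update a i b) i ≤ blindUtil G B fbl fnbl a i

/-- the price of anarchy for the blind network with blind agents `B` -/
def blindPoA (n : ℕ) (w : ℕ → ℝ) (B : Finset (Fin n)) (fbl : ℝ) (fnbl : ℕ → ℝ) : ℝ :=
  sInf {q | ∃ G : RAGame n, GoodGame G w ∧ (∃ a, IsBlindNash G B fbl fnbl a) ∧
    q = sInf {x | ∃ a, IsBlindNash G B fbl fnbl a ∧ x = G.welf w a} /
        sSup {x | ∃ a, G.IsProfile a ∧ x = G.welf w a}}

/-- a triple `(a, x, b)` with entries of size at most `n` -/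
abbrev Trip (n : ℕ) := Fin (n + 1) × Fin (n + 1) × Fin (n + 1)

def ta1 (t : Trip n × Trip n) : ℕ := (t.1.1 : ℕ)
def tx1 (t : Trip n × Trip n) : ℕ := (t.1.2.1 : ℕ)
def tb1 (t : Trip n × Trip n) : ℕ := (t.1.2.2 : ℕ)
def ta2 (t : Trip n × Trip n) : ℕ := (t.2.1 : ℕ)
def tx2 (t : Trip n × Trip n) : ℕ := (t.2.2.1 : ℕ)
def tb2 (t : Trip n × Trip n) : ℕ := (t.2.2.2 : ℕ)

/-- `A_t` for the two-class (blind) network; also equals `A_{t,2}` -/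
def At2 (t : Trip n × Trip n) : ℕ := ta1 t + tx1 t + ta2 t + tx2 t

/-- `B_t` for the two-class (blind) network -/
def Bt2 (t : Trip n × Trip n) : ℕ := tb1 t + tx1 t + tb2 t + tx2 t

end Blind

/-- the index set `𝓘` for the two-class (blind) network with `κ` blind agents -/
def I2 (n κ : ℕ) : Finset (Trip n × Trip n) :=
  Finset.univ.filter fun t =>
    ta1 t + tx1 t + tb1 t ≤ κ ∧ ta2 t + tx2 t + tb2 t ≤ n - κ ∧
    1 ≤ ta1 t + tx1 t + tb1 t + (ta2 t + tx2 t + tb2 t) ∧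
    ta1 t + tx1 t + tb1 t + (ta2 t + tx2 t + tb2 t) ≤ n

/-- the reduced index set `𝓘_R` for the two-class (blind) network -/
def IR2 (n κ : ℕ) : Finset (Trip n × Trip n) :=
  (I2 n κ).filter fun t =>
    (ta1 t * tx1 t * tb1 t = 0 ∨ ta1 t + tx1 t + tb1 t = κ) ∧
    (ta2 t * tx2 t * tb2 t = 0 ∨ ta2 t + tx2 t + tb2 t = n - κ)

section BlindLP

variable {n : ℕ}

/-- the dual LP constraint for the blind network at index `t` -/
def BlindDualConstr (w : ℕ → ℝ) (fnbl : ℕ → ℝ) (l1 l2 μ : ℝ) (t : Trip n × Trip n) : Prop :=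
  w (Bt2 t) + l1 * ((ta1 t : ℝ) - (tb1 t : ℝ)) +
      l2 * ((ta2 t : ℝ) * fnbl (At2 t) - (tb2 t : ℝ) * fnbl (At2 t + 1))
    ≤ μ * w (At2 t)

/-- the set of dual-feasible values `μ` for the blind network; `V* = sInf` of this set -/
def BlindDualSet (n κ : ℕ) (w : ℕ → ℝ) (fnbl : ℕ → ℝ) : Set ℝ :=
  {μ | ∃ l1 l2 : ℝ, 0 ≤ l1 ∧ 0 ≤ l2 ∧ ∀ t ∈ IR2 n κ, BlindDualConstr w fnbl l1 l2 μ t}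

/-- feasibility for the optimal-design LP of the blind network -/
def BlindDesignFeas (n κ : ℕ) (w : ℕ → ℝ) (fnbl : ℕ → ℝ) (μ : ℝ) : Prop :=
  fnbl 0 = 0 ∧ fnbl (n + 1) = 0 ∧ ∃ l : ℝ, 0 ≤ l ∧ ∀ t ∈ IR2 n κ,
    w (Bt2 t) + l * ((ta1 t : ℝ) - (tb1 t : ℝ)) + (ta2 t : ℝ) * fnbl (At2 t)
      - (tb2 t : ℝ) * fnbl (At2 t + 1) ≤ μ * w (At2 t)

/-- `𝓡(t)` for the two-class blind network with blind agents `B` -/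
def Rt2 (G : RAGame n) (B : Finset (Fin n)) (ane aopt : Fin n → Finset (Fin G.m))
    (t : Trip n × Trip n) : Finset (Fin G.m) :=
  Finset.univ.filter fun r =>
    G.cnt ane B r = ta1 t + tx1 t ∧ G.cnt aopt B r = tb1 t + tx1 t ∧
    (B.filter fun i => r ∈ ane i ∧ r ∈ aopt i).card = tx1 t ∧
    G.cnt ane Bᶜ r = ta2 t + tx2 t ∧ G.cnt aopt Bᶜ r = tb2 t + tx2 t ∧
    (Bᶜ.filter fun i => r ∈ ane i ∧ r ∈ aopt i).card = tx2 t

/-- `θ(t)` for the two-class blind network -/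
def θof2 (G : RAGame n) (B : Finset (Fin n)) (ane aopt : Fin n → Finset (Fin G.m))
    (t : Trip n × Trip n) : ℝ :=
  ∑ r ∈ Rt2 G B ane aopt t, G.v r

end BlindLP

/-- the potential function `G_j(a) = ∑_r v_r ∑_{l=1}^{|a|_r^{𝓝_j}} f_j(l)` -/
def potentialG {n k : ℕ} (G : RAGame n) (net : Network n k) (f : Fin k → ℕ → ℝ)
    (j : Fin k) (a : Fin n → Finset (Fin G.m)) : ℝ :=
  ∑ r, G.v r * ∑ l ∈ Finset.Icc 1 (G.cnt a (net.Nb j) r), f j l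

/-- the potential `G_1(a) = ∑_r v_r |a|_r^{bl}` for the class of blind agents `B` -/
def blindPotential {n : ℕ} (G : RAGame n) (B : Finset (Fin n))
    (a : Fin n → Finset (Fin G.m)) : ℝ :=
  ∑ r, G.v r * (G.cnt a B r : ℝ)

/-- the game with every resource value scaled by `c ≥ 0` -/
def RAGame.scale {n : ℕ} (G : RAGame n) (c : ℝ) (hc : 0 ≤ c) : RAGame n :=
  ⟨G.m, fun r => c * G.v r, fun r => mul_nonneg hc (G.v_nonneg r), G.act, G.act_nonempty⟩

/-- the game with the same resources but the action set of each agent `i`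
restricted to `{a i, b i}` -/
def RAGame.restrictTwo {n : ℕ} (G : RAGame n) (a b : Fin n → Finset (Fin G.m)) : RAGame n :=
  ⟨G.m, G.v, G.v_nonneg, fun i => {a i, b i}, fun i => ⟨a i, by simp⟩⟩

end


section MainAux

variable {n k : ℕ}

private lemma aux_sum_κ (net : Network n k) : ∑ l, net.κ l = n := by
  have h := Finset.card_eq_sum_card_fiberwise
    (f := net.cls) (t := (Finset.univ : Finset (Fin k)))
    (fun i (_ : i ∈ (Finset.univ : Finset (Fin n))) => Finset.mem_univ (net.cls i))
  simpa [Network.κ, Network.classSet] using h.symm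

private lemma aux_cnt_nb (G : RAGame n) (net : Network n k)
    (a : Fin n → Finset (Fin G.m)) (j : Fin k) (r : Fin G.m) :
    G.cnt a (net.Nb j) r =
      ∑ l ∈ Finset.univ.filter (fun l => net.classSet l ⊆ net.Nb j),
        G.cnt a (net.classSet l) r := by
  rw [Finset.sum_filter]
  unfold RAGame.cnt
  rw [Finset.card_eq_sum_card_fiberwise (f := net.cls)
    (t := (Finset.univ : Finset (Fin k))) (fun i _ => Finset.mem_univ _)]
  refine Finset.sum_congr rfl fun l _ => ?_
  by_cases h : net.classSet l ⊆ net.Nb j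
  · rw [if_pos h]
    congr 1
    ext i
    simp only [Finset.mem_filter, Network.classSet, Finset.mem_univ, true_and]
    constructor
    · rintro ⟨⟨_, hP⟩, hc⟩; exact ⟨hc, hP⟩
    · rintro ⟨hc, hP⟩
      refine ⟨⟨h ?_, hP⟩, hc⟩
      simp [Network.classSet, hc]
  · rw [if_neg h, Finset.card_eq_zero, Finset.eq_empty_iff_forall_notMem]
    rintro i hi
    simp only [Finset.mem_filter] at hi
    obtain ⟨⟨hiNb, _⟩, hcls⟩ := hi
    refine h fun i' hi' => ?_
    simp only [Network.classSet, Finset.mem_filter, Finset.mem_univ, true_and] at hi'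
    exact net.Nb_union j i i' (by rw [hcls, hi']) hiNb

private lemma aux_swap (G : RAGame n) (S : Finset (Fin n))
    (a : Fin n → Finset (Fin G.m)) (F : Fin G.m → ℝ) :
    ∑ i ∈ S, ∑ r ∈ a i, F r = ∑ r, (G.cnt a S r : ℝ) * F r := by
  calc ∑ i ∈ S, ∑ r ∈ a i, F r
      = ∑ i ∈ S, ∑ r, if r ∈ a i then F r else 0 := by
        refine Finset.sum_congr rfl fun i _ => ?_
        rw [Finset.sum_ite_mem, Finset.univ_inter]
    _ = ∑ r, ∑ i ∈ S, if r ∈ a i then F r else 0 := Finset.sum_comm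
    _ = ∑ r, (G.cnt a S r : ℝ) * F r := by
        refine Finset.sum_congr rfl fun r _ => ?_
        rw [Finset.sum_ite, Finset.sum_const, Finset.sum_const_zero, add_zero,
          nsmul_eq_mul]
        rfl

private lemma aux_swap2 (G : RAGame n) (S : Finset (Fin n))
    (a b : Fin n → Finset (Fin G.m)) (F1 F2 : Fin G.m → ℝ) :
    (∑ i ∈ S, ∑ r ∈ b i, if r ∈ a i then F1 r else F2 r) =
      ∑ r, (((S.filter fun i => r ∈ a i ∧ r ∈ b i).card : ℝ) * F1 r +
        ((S.filter fun i => r ∈ b i ∧ r ∉ a i).card : ℝ) * F2 r) := by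
  calc (∑ i ∈ S, ∑ r ∈ b i, if r ∈ a i then F1 r else F2 r)
      = ∑ i ∈ S, ∑ r, if r ∈ b i then (if r ∈ a i then F1 r else F2 r) else 0 := by
        refine Finset.sum_congr rfl fun i _ => ?_
        rw [Finset.sum_ite_mem, Finset.univ_inter]
    _ = ∑ r, ∑ i ∈ S, if r ∈ b i then (if r ∈ a i then F1 r else F2 r) else 0 :=
        Finset.sum_comm
    _ = ∑ r, (((S.filter fun i => r ∈ a i ∧ r ∈ b i).card : ℝ) * F1 r +
        ((S.filter fun i => r ∈ b i ∧ r ∉ a i).card : ℝ) * F2 r) := by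
        refine Finset.sum_congr rfl fun r _ => ?_
        have hsplit : ∀ i, (if r ∈ b i then (if r ∈ a i then F1 r else F2 r) else 0) =
            (if r ∈ a i ∧ r ∈ b i then F1 r else 0) +
            (if r ∈ b i ∧ r ∉ a i then F2 r else 0) := by
          intro i
          by_cases hb : r ∈ b i <;> by_cases ha : r ∈ a i <;> simp [hb, ha]
        rw [Finset.sum_congr rfl fun i _ => hsplit i, Finset.sum_add_distrib,
          Finset.sum_ite, Finset.sum_ite]
        simp [nsmul_eq_mul, mul_comm]

private lemma aux_cnt_update (G : RAGame n) (a : Fin n → Finset (Fin G.m)) (i : Fin n)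
    (b : Finset (Fin G.m)) (S : Finset (Fin n)) (hi : i ∈ S) (r : Fin G.m) (hr : r ∈ b) :
    G.cnt (Function.update a i b) S r =
      if r ∈ a i then G.cnt a S r else G.cnt a S r + 1 := by
  unfold RAGame.cnt
  by_cases h : r ∈ a i
  · rw [if_pos h]
    congr 1
    ext i'
    simp only [Finset.mem_filter, Function.update_apply]
    by_cases hii : i' = i <;> simp [hii, h, hr]
  · rw [if_neg h]
    have hins : S.filter (fun i' => r ∈ Function.update a i b i') =
        insert i (S.filter fun i' => r ∈ a i') := by
      ext i'
      simp only [Finset.mem_filter, Function.update_apply, Finset.mem_insert]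
      by_cases hii : i' = i <;> simp [hii, h, hr, hi]
    rw [hins, Finset.card_insert_of_notMem (by simp [h])]

end MainAux


section SigAux

variable {n k : ℕ} (G : RAGame n) (net : Network n k) (ane aopt : Fin n → Finset (Fin G.m))

private def cXv (r : Fin G.m) (l : Fin k) : ℕ :=
  ((net.classSet l).filter fun i => r ∈ ane i ∧ r ∈ aopt i).card

private lemma cnt_le_κ (a : Fin n → Finset (Fin G.m)) (r : Fin G.m) (l : Fin k) :
    G.cnt a (net.classSet l) r ≤ net.κ l :=
  Finset.card_filter_le _ _

private lemma κ_le_n (l : Fin k) : net.κ l ≤ n :=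
  le_trans (Finset.card_le_univ _) (by simp)

private lemma cX_le_cA (r : Fin G.m) (l : Fin k) :
    cXv G net ane aopt r l ≤ G.cnt ane (net.classSet l) r :=
  Finset.card_le_card fun i hi => by
    simp only [Finset.mem_filter] at hi ⊢; exact ⟨hi.1, hi.2.1⟩

private lemma cX_le_cB (r : Fin G.m) (l : Fin k) :
    cXv G net ane aopt r l ≤ G.cnt aopt (net.classSet l) r :=
  Finset.card_le_card fun i hi => by
    simp only [Finset.mem_filter] at hi ⊢; exact ⟨hi.1, hi.2.2⟩

private def sigf (r : Fin G.m) : Idx n k := fun l =>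
  (⟨G.cnt ane (net.classSet l) r - cXv G net ane aopt r l,
      Nat.lt_succ_of_le (le_trans (Nat.sub_le _ _)
        (le_trans (cnt_le_κ G net ane r l) (κ_le_n net l)))⟩,
   ⟨cXv G net ane aopt r l,
      Nat.lt_succ_of_le (le_trans (cX_le_cA G net ane aopt r l)
        (le_trans (cnt_le_κ G net ane r l) (κ_le_n net l)))⟩,
   ⟨G.cnt aopt (net.classSet l) r - cXv G net ane aopt r l,
      Nat.lt_succ_of_le (le_trans (Nat.sub_le _ _)
        (le_trans (cnt_le_κ G net aopt r l) (κ_le_n net l)))⟩)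

private lemma xI_sigf (r : Fin G.m) (l : Fin k) :
    xI (sigf G net ane aopt r) l = cXv G net ane aopt r l := rfl

private lemma bI_sigf (r : Fin G.m) (l : Fin k) :
    bI (sigf G net ane aopt r) l =
      G.cnt aopt (net.classSet l) r - cXv G net ane aopt r l := rfl

private lemma ax_sigf (r : Fin G.m) (l : Fin k) :
    aI (sigf G net ane aopt r) l + xI (sigf G net ane aopt r) l =
      G.cnt ane (net.classSet l) r :=
  Nat.sub_add_cancel (cX_le_cA G net ane aopt r l)

private lemma bx_sigf (r : Fin G.m) (l : Fin k) :
    bI (sigf G net ane aopt r) l + xI (sigf G net ane aopt r) l =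
      G.cnt aopt (net.classSet l) r :=
  Nat.sub_add_cancel (cX_le_cB G net ane aopt r l)

private lemma mem_Rt_sigf (r : Fin G.m) :
    r ∈ Rt G net ane aopt (sigf G net ane aopt r) := by
  simp only [Rt, Finset.mem_filter, Finset.mem_univ, true_and]
  exact fun l => ⟨(ax_sigf G net ane aopt r l).symm, (bx_sigf G net ane aopt r l).symm, rfl⟩

private lemma eq_sigf_of_mem_Rt (r : Fin G.m) (t : Idx n k)
    (h : r ∈ Rt G net ane aopt t) : t = sigf G net ane aopt r := by
  simp only [Rt, Finset.mem_filter, Finset.mem_univ, true_and] at h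
  funext l
  obtain ⟨hA, hB, hX⟩ := h l
  have hx : xI t l = cXv G net ane aopt r l := hX.symm ▸ rfl
  refine Prod.ext (Fin.ext ?_) (Prod.ext (Fin.ext ?_) (Fin.ext ?_))
  · show aI t l = G.cnt ane (net.classSet l) r - cXv G net ane aopt r l
    omega
  · exact hx
  · show bI t l = G.cnt aopt (net.classSet l) r - cXv G net ane aopt r l
    omega

private lemma sig3 (r : Fin G.m) (l : Fin k) :
    aI (sigf G net ane aopt r) l + xI (sigf G net ane aopt r) l +
      bI (sigf G net ane aopt r) l ≤ net.κ l := by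
  have e1 := ax_sigf G net ane aopt r l
  have e2 := bx_sigf G net ane aopt r l
  have hXB := cX_le_cB G net ane aopt r l
  have hx := xI_sigf G net ane aopt r l
  have hunion := Finset.card_union_add_card_inter
    ((net.classSet l).filter fun i => r ∈ ane i)
    ((net.classSet l).filter fun i => r ∈ aopt i)
  have hint : ((net.classSet l).filter fun i => r ∈ ane i) ∩
      ((net.classSet l).filter fun i => r ∈ aopt i) =
      (net.classSet l).filter fun i => r ∈ ane i ∧ r ∈ aopt i :=
    (Finset.filter_and _ _ _).symm
  rw [hint] at hunion
  have hsub : (((net.classSet l).filter fun i => r ∈ ane i) ∪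
      ((net.classSet l).filter fun i => r ∈ aopt i)).card ≤ net.κ l :=
    Finset.card_le_card (Finset.union_subset (Finset.filter_subset _ _)
      (Finset.filter_subset _ _))
  have hA' : G.cnt ane (net.classSet l) r =
      ((net.classSet l).filter fun i => r ∈ ane i).card := rfl
  have hB' : G.cnt aopt (net.classSet l) r =
      ((net.classSet l).filter fun i => r ∈ aopt i).card := rfl
  have hX' : cXv G net ane aopt r l =
      ((net.classSet l).filter fun i => r ∈ ane i ∧ r ∈ aopt i).card := rfl
  omega

private lemma sig_sum_le (r : Fin G.m) :
    ∑ l, (aI (sigf G net ane aopt r) l + xI (sigf G net ane aopt r) l +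
      bI (sigf G net ane aopt r) l) ≤ n :=
  le_trans (Finset.sum_le_sum fun l _ => sig3 G net ane aopt r l)
    (le_of_eq (aux_sum_κ net))

private lemma mem_Iset_sigf_iff (r : Fin G.m) :
    sigf G net ane aopt r ∈ Iset n k net.κ ↔
      1 ≤ ∑ l, (aI (sigf G net ane aopt r) l + xI (sigf G net ane aopt r) l +
        bI (sigf G net ane aopt r) l) := by
  unfold Iset
  rw [Finset.mem_filter]
  simp only [Finset.mem_univ, true_and]
  exact ⟨fun h => h.2.1,
    fun h => ⟨fun l => sig3 G net ane aopt r l, h, sig_sum_le G net ane aopt r⟩⟩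

private lemma notMem_zero (r : Fin G.m)
    (hs : sigf G net ane aopt r ∉ Iset n k net.κ) (l : Fin k) :
    G.cnt ane (net.classSet l) r = 0 ∧ G.cnt aopt (net.classSet l) r = 0 := by
  rw [mem_Iset_sigf_iff] at hs
  have h0 : ∑ l, (aI (sigf G net ane aopt r) l + xI (sigf G net ane aopt r) l +
      bI (sigf G net ane aopt r) l) = 0 := by omega
  have hl := (Finset.sum_eq_zero_iff).mp h0 l (Finset.mem_univ l)
  have e1 := ax_sigf G net ane aopt r l
  have e2 := bx_sigf G net ane aopt r l
  omega

private lemma Atj_sigf (r : Fin G.m) (j : Fin k) :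
    Atj net (sigf G net ane aopt r) j = G.cnt ane (net.Nb j) r := by
  rw [aux_cnt_nb G net ane j r]
  exact Finset.sum_congr rfl fun l _ => ax_sigf G net ane aopt r l

private lemma card_b_not_a (r : Fin G.m) (l : Fin k) :
    ((net.classSet l).filter fun i => r ∈ aopt i ∧ r ∉ ane i).card =
      G.cnt aopt (net.classSet l) r - cXv G net ane aopt r l := by
  classical
  have h := Finset.card_filter_add_card_filter_not
    (s := (net.classSet l).filter fun i => r ∈ aopt i) (p := fun i => r ∈ ane i)
  rw [Finset.filter_filter, Finset.filter_filter] at h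
  have e1 : ((net.classSet l).filter fun i => r ∈ aopt i ∧ r ∈ ane i) =
      (net.classSet l).filter fun i => r ∈ ane i ∧ r ∈ aopt i := by
    ext i; simp [and_comm]
  rw [e1] at h
  have e2 : ((net.classSet l).filter fun i => r ∈ aopt i ∧ ¬ r ∈ ane i) =
      (net.classSet l).filter fun i => r ∈ aopt i ∧ r ∉ ane i := rfl
  have hX' : cXv G net ane aopt r l =
      ((net.classSet l).filter fun i => r ∈ ane i ∧ r ∈ aopt i).card := rfl
  have hB' : G.cnt aopt (net.classSet l) r =
      ((net.classSet l).filter fun i => r ∈ aopt i).card := rfl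
  omega

private lemma sum_Rt (F : Idx n k → Fin G.m → ℝ) :
    ∑ t ∈ Iset n k net.κ, ∑ r ∈ Rt G net ane aopt t, F t r =
      ∑ r, if sigf G net ane aopt r ∈ Iset n k net.κ
        then F (sigf G net ane aopt r) r else 0 := by
  calc ∑ t ∈ Iset n k net.κ, ∑ r ∈ Rt G net ane aopt t, F t r
      = ∑ t ∈ Iset n k net.κ, ∑ r, if r ∈ Rt G net ane aopt t then F t r else 0 := by
        refine Finset.sum_congr rfl fun t _ => ?_
        rw [Finset.sum_ite_mem, Finset.univ_inter]
    _ = ∑ r, ∑ t ∈ Iset n k net.κ, if r ∈ Rt G net ane aopt t then F t r else 0 :=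
        Finset.sum_comm
    _ = _ := by
        refine Finset.sum_congr rfl fun r _ => ?_
        by_cases hs : sigf G net ane aopt r ∈ Iset n k net.κ
        · rw [if_pos hs, Finset.sum_eq_single_of_mem _ hs
            (fun t _ hne => if_neg fun hr => hne (eq_sigf_of_mem_Rt G net ane aopt r t hr)),
            if_pos (mem_Rt_sigf G net ane aopt r)]
        · rw [if_neg hs, Finset.sum_eq_zero]
          intro t ht
          exact if_neg fun hr => hs ((eq_sigf_of_mem_Rt G net ane aopt r t hr) ▸ ht)

end SigAux

/-- class-aggregated utilities at `a^ne` and at unilateral deviations to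
`a^opt`, expressed through `θ` built from the pair. -/
theorem class_utility_via_theta {n k : ℕ} (G : RAGame n) (net : Network n k)
    (f : Fin k → ℕ → ℝ) (hf : IsMech net f)
    (ane aopt : Fin n → Finset (Fin G.m))
    (hane : G.IsProfile ane) (haopt : G.IsProfile aopt) (j : Fin k) :
    (∑ i ∈ net.classSet j, G.util net f ane i) =
      ∑ t ∈ Iset n k net.κ,
        ((aI t j + xI t j : ℕ) : ℝ) * f j (Atj net t j) * θof G net ane aopt t ∧
    (∑ i ∈ net.classSet j, G.util net f (Function.update ane i (aopt i)) i) =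
      ∑ t ∈ Iset n k net.κ,
        ((xI t j : ℝ) * f j (Atj net t j) + (bI t j : ℝ) * f j (Atj net t j + 1)) *
          θof G net ane aopt t := by
  classical
  have hcls : ∀ i ∈ net.classSet j, net.cls i = j := fun i hi => by
    simpa [Network.classSet] using hi
  constructor
  · -- part 1
    have hmul : ∀ t ∈ Iset n k net.κ,
        ((aI t j + xI t j : ℕ) : ℝ) * f j (Atj net t j) * θof G net ane aopt t =
        ∑ r ∈ Rt G net ane aopt t,
          ((aI t j + xI t j : ℕ) : ℝ) * f j (Atj net t j) * G.v r := fun t _ =>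
      Finset.mul_sum _ _ _
    rw [Finset.sum_congr rfl hmul,
      sum_Rt G net ane aopt
        (fun t r => ((aI t j + xI t j : ℕ) : ℝ) * f j (Atj net t j) * G.v r)]
    have hutil : ∀ i ∈ net.classSet j, G.util net f ane i =
        ∑ r ∈ ane i, (fun r => G.v r * f j (G.cnt ane (net.Nb j) r)) r := by
      intro i hi
      unfold RAGame.util
      rw [hcls i hi]
    rw [Finset.sum_congr rfl hutil, aux_swap]
    refine Finset.sum_congr rfl fun r _ => ?_
    by_cases hs : sigf G net ane aopt r ∈ Iset n k net.κ
    · rw [if_pos hs, Atj_sigf, ax_sigf]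
      ring
    · rw [if_neg hs, (notMem_zero G net ane aopt r hs j).1]
      simp
  · -- part 2
    have hmul : ∀ t ∈ Iset n k net.κ,
        ((xI t j : ℝ) * f j (Atj net t j) + (bI t j : ℝ) * f j (Atj net t j + 1)) *
          θof G net ane aopt t =
        ∑ r ∈ Rt G net ane aopt t,
          ((xI t j : ℝ) * f j (Atj net t j) + (bI t j : ℝ) * f j (Atj net t j + 1)) *
            G.v r := fun t _ => Finset.mul_sum _ _ _
    rw [Finset.sum_congr rfl hmul,
      sum_Rt G net ane aopt
        (fun t r => ((xI t j : ℝ) * f j (Atj net t j) +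
          (bI t j : ℝ) * f j (Atj net t j + 1)) * G.v r)]
    have hutil : ∀ i ∈ net.classSet j,
        G.util net f (Function.update ane i (aopt i)) i =
        ∑ r ∈ aopt i, (if r ∈ ane i
          then (fun r => G.v r * f j (G.cnt ane (net.Nb j) r)) r
          else (fun r => G.v r * f j (G.cnt ane (net.Nb j) r + 1)) r) := by
      intro i hi
      have hiNb : i ∈ net.Nb j := by
        have := net.mem_Nb i
        rwa [hcls i hi] at this
      unfold RAGame.util
      rw [hcls i hi, Function.update_self]
      refine Finset.sum_congr rfl fun r hr => ?_
      rw [aux_cnt_update G ane i (aopt i) (net.Nb j) hiNb r hr]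
      by_cases h : r ∈ ane i <;> simp [h]
    rw [Finset.sum_congr rfl hutil, aux_swap2]
    refine Finset.sum_congr rfl fun r _ => ?_
    by_cases hs : sigf G net ane aopt r ∈ Iset n k net.κ
    · rw [if_pos hs, Atj_sigf, xI_sigf, bI_sigf, card_b_not_a]
      have hX' : ((net.classSet j).filter fun i => r ∈ ane i ∧ r ∈ aopt i).card =
          cXv G net ane aopt r j := rfl
      rw [hX']
      ring
    · rw [if_neg hs]
      have h2 := (notMem_zero G net ane aopt r hs j).2
      have hcx : cXv G net ane aopt r j = 0 :=
        Nat.le_antisymm (h2 ▸ cX_le_cB G net ane aopt r j) (Nat.zero_le _)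
      have hX' : ((net.classSet j).filter fun i => r ∈ ane i ∧ r ∈ aopt i).card =
          cXv G net ane aopt r j := rfl
      have hcb := card_b_not_a G net ane aopt r j
      rw [hX', hcx, hcb, h2]
      simp
end

section
/- Let G be a resource allocation game with network (𝓒,𝓝) and mechanism f, let a^ne be a pure Nash equilibrium of G with W(a^ne) = 1, and let a^opt be any action profile of G. Let θ : 𝓘 → ℝ be constructed from (a^ne, a^opt) as in the context. Then θ is feasible for the primal LP, i.e. θ(t) ≥ 0 for all t, Σ_{t∈𝓘} [a_j f_j(A_{t,j}) − b_j f_j(A_{t,j}+1)] θ(t) ≥ 0 for every j ∈ {1,…,k}, and Σ_{t∈𝓘} w(A_t) θ(t) = 1; moreover its LP objective value satisfies Σ_{t∈𝓘} w(B_t) θ(t) = W(a^opt). -/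
open Finset

namespace ThetaAux

open Finset

variable {n k : ℕ} (G : RAGame n) (net : Network n k) (ane aopt : Fin n → Finset (Fin G.m))

lemma cnt_le_n (a : Fin n → Finset (Fin G.m)) (S : Finset (Fin n)) (r : Fin G.m) :
    G.cnt a S r ≤ n := by
  calc (S.filter fun i => r ∈ a i).card ≤ S.card := Finset.card_filter_le _ _
    _ ≤ (Finset.univ : Finset (Fin n)).card := Finset.card_le_univ _
    _ = n := Finset.card_fin n

/-- number of agents of class `j` selecting `r` at both profiles -/
def xc (j : Fin k) (r : Fin G.m) : ℕ :=
  ((net.classSet j).filter fun i => r ∈ ane i ∧ r ∈ aopt i).card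

lemma xc_le_n (j : Fin k) (r : Fin G.m) : xc G net ane aopt j r ≤ n := by
  calc xc G net ane aopt j r ≤ (net.classSet j).card := Finset.card_filter_le _ _
    _ ≤ (Finset.univ : Finset (Fin n)).card := Finset.card_le_univ _
    _ = n := Finset.card_fin n

lemma xc_le_ne (j : Fin k) (r : Fin G.m) :
    xc G net ane aopt j r ≤ G.cnt ane (net.classSet j) r :=
  Finset.card_le_card (fun i hi => by
    simp only [Finset.mem_filter] at hi ⊢; exact ⟨hi.1, hi.2.1⟩)

lemma xc_le_opt (j : Fin k) (r : Fin G.m) :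
    xc G net ane aopt j r ≤ G.cnt aopt (net.classSet j) r :=
  Finset.card_le_card (fun i hi => by
    simp only [Finset.mem_filter] at hi ⊢; exact ⟨hi.1, hi.2.2⟩)

/-- the signature of a resource -/
def sig (r : Fin G.m) : Idx n k := fun j =>
  (⟨G.cnt ane (net.classSet j) r - xc G net ane aopt j r,
      Nat.lt_succ_of_le (le_trans (Nat.sub_le _ _) (cnt_le_n G ane _ r))⟩,
   ⟨xc G net ane aopt j r, Nat.lt_succ_of_le (xc_le_n G net ane aopt j r)⟩,
   ⟨G.cnt aopt (net.classSet j) r - xc G net ane aopt j r,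
      Nat.lt_succ_of_le (le_trans (Nat.sub_le _ _) (cnt_le_n G aopt _ r))⟩)

lemma ax_sig (r : Fin G.m) (j : Fin k) :
    aI (sig G net ane aopt r) j + xI (sig G net ane aopt r) j
      = G.cnt ane (net.classSet j) r :=
  Nat.sub_add_cancel (xc_le_ne G net ane aopt j r)

lemma bx_sig (r : Fin G.m) (j : Fin k) :
    bI (sig G net ane aopt r) j + xI (sig G net ane aopt r) j
      = G.cnt aopt (net.classSet j) r :=
  Nat.sub_add_cancel (xc_le_opt G net ane aopt j r)

lemma mem_Rt_iff (t : Idx n k) (r : Fin G.m) :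
    r ∈ Rt G net ane aopt t ↔ sig G net ane aopt r = t := by
  simp only [Rt, Finset.mem_filter, Finset.mem_univ, true_and]
  constructor
  · intro h
    funext j
    obtain ⟨h1, h2, h3⟩ := h j
    have hx : xc G net ane aopt j r = xI t j := h3
    ext
    · show G.cnt ane (net.classSet j) r - xc G net ane aopt j r = aI t j
      omega
    · show xc G net ane aopt j r = xI t j
      omega
    · show G.cnt aopt (net.classSet j) r - xc G net ane aopt j r = bI t j
      omega
  · rintro rfl j
    refine ⟨(ax_sig G net ane aopt r j).symm, (bx_sig G net ane aopt r j).symm, rfl⟩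

end ThetaAux
namespace ThetaAux

variable {n k : ℕ} (G : RAGame n) (net : Network n k) (ane aopt : Fin n → Finset (Fin G.m))

lemma sum_cnt_class (a : Fin n → Finset (Fin G.m)) (r : Fin G.m) :
    ∑ j, G.cnt a (net.classSet j) r = G.cnt a Finset.univ r := by
  unfold RAGame.cnt
  rw [Finset.card_eq_sum_card_fiberwise (f := net.cls) (t := Finset.univ)
    (fun i _ => Finset.mem_univ _)]
  refine Finset.sum_congr rfl fun j _ => ?_
  congr 1
  ext i
  simp [Network.classSet, and_comm]

lemma cnt_Nb (a : Fin n → Finset (Fin G.m)) (j : Fin k) (r : Fin G.m) :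
    ∑ l ∈ Finset.univ.filter (fun l => net.classSet l ⊆ net.Nb j),
        G.cnt a (net.classSet l) r = G.cnt a (net.Nb j) r := by
  unfold RAGame.cnt
  rw [Finset.card_eq_sum_card_fiberwise (f := net.cls)
    (t := Finset.univ.filter (fun l => net.classSet l ⊆ net.Nb j))
    (fun i hi => by
      simp only [Finset.mem_coe, Finset.mem_filter, Finset.mem_univ, true_and] at hi ⊢
      intro i' hi'
      simp only [Network.classSet, Finset.mem_filter, Finset.mem_univ, true_and] at hi'
      exact net.Nb_union j i i' hi'.symm hi.1)]
  refine Finset.sum_congr rfl fun l hl => ?_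
  simp only [Finset.mem_filter, Finset.mem_univ, true_and] at hl
  congr 1
  ext i
  simp only [Finset.mem_filter, Network.classSet, Finset.mem_univ, true_and]
  constructor
  · intro h
    have h3 : net.cls i = l := h.1
    have h4 : i ∈ net.Nb j := hl (by simp [Network.classSet, h3])
    tauto
  · tauto

lemma Atj_sig (r : Fin G.m) (j : Fin k) :
    Atj net (sig G net ane aopt r) j = G.cnt ane (net.Nb j) r := by
  rw [← cnt_Nb G net ane j r]
  exact Finset.sum_congr rfl fun l _ => ax_sig G net ane aopt r l

lemma AtI_sig (r : Fin G.m) :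
    AtI (sig G net ane aopt r) = G.cnt ane Finset.univ r := by
  rw [← sum_cnt_class G net ane r]
  exact Finset.sum_congr rfl fun l _ => ax_sig G net ane aopt r l

lemma BtI_sig (r : Fin G.m) :
    BtI (sig G net ane aopt r) = G.cnt aopt Finset.univ r := by
  rw [← sum_cnt_class G net aopt r]
  exact Finset.sum_congr rfl fun l _ => bx_sig G net ane aopt r l

lemma sum_axb (r : Fin G.m) :
    ∑ j, (aI (sig G net ane aopt r) j + xI (sig G net ane aopt r) j
        + bI (sig G net ane aopt r) j)
      ≤ G.cnt ane Finset.univ r + G.cnt aopt Finset.univ r := by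
  rw [← sum_cnt_class G net ane r, ← sum_cnt_class G net aopt r, ← Finset.sum_add_distrib]
  refine Finset.sum_le_sum fun j _ => ?_
  have h1 := ax_sig G net ane aopt r j
  have h2 := bx_sig G net ane aopt r j
  omega

lemma axb_le_kappa (r : Fin G.m) (j : Fin k) :
    aI (sig G net ane aopt r) j + xI (sig G net ane aopt r) j
      + bI (sig G net ane aopt r) j ≤ net.κ j := by
  have h1 := ax_sig G net ane aopt r j
  have h2 := bx_sig G net ane aopt r j
  have hincl : G.cnt ane (net.classSet j) r + G.cnt aopt (net.classSet j) r
      = ((net.classSet j).filter (fun i => r ∈ ane i) ∪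
          (net.classSet j).filter (fun i => r ∈ aopt i)).card + xc G net ane aopt j r := by
    rw [xc, Finset.filter_and]
    exact (Finset.card_union_add_card_inter _ _).symm
  have hsub : ((net.classSet j).filter (fun i => r ∈ ane i) ∪
      (net.classSet j).filter (fun i => r ∈ aopt i)).card ≤ net.κ j := by
    refine Finset.card_le_card fun i hi => ?_
    rcases Finset.mem_union.1 hi with h | h
    · exact Finset.mem_of_mem_filter i h
    · exact Finset.mem_of_mem_filter i h
  have h3 : xI (sig G net ane aopt r) j = xc G net ane aopt j r := rfl
  omega

lemma sum_kappa : ∑ j, net.κ j = n := by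
  have := Finset.card_eq_sum_card_fiberwise (f := net.cls) (s := Finset.univ)
    (t := Finset.univ) (fun i _ => Finset.mem_univ _)
  simpa [Network.κ, Network.classSet, Finset.card_fin] using this.symm

lemma sig_mem_Iset (r : Fin G.m)
    (hr : 1 ≤ G.cnt ane Finset.univ r + G.cnt aopt Finset.univ r) :
    sig G net ane aopt r ∈ Iset n k net.κ := by
  simp only [Iset, Finset.mem_filter, Finset.mem_univ, true_and]
  refine ⟨fun j => axb_le_kappa G net ane aopt r j, ?_, ?_⟩
  · have h1 : G.cnt ane Finset.univ r
        ≤ ∑ j, (aI (sig G net ane aopt r) j + xI (sig G net ane aopt r) j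
            + bI (sig G net ane aopt r) j) := by
      rw [← sum_cnt_class G net ane r]
      exact Finset.sum_le_sum fun j _ => by
        have := ax_sig G net ane aopt r j; omega
    have h2 : G.cnt aopt Finset.univ r
        ≤ ∑ j, (aI (sig G net ane aopt r) j + xI (sig G net ane aopt r) j
            + bI (sig G net ane aopt r) j) := by
      rw [← sum_cnt_class G net aopt r]
      exact Finset.sum_le_sum fun j _ => by
        have := bx_sig G net ane aopt r j; omega
    omega
  · calc ∑ j, (aI (sig G net ane aopt r) j + xI (sig G net ane aopt r) j
        + bI (sig G net ane aopt r) j) ≤ ∑ j, net.κ j :=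
          Finset.sum_le_sum fun j _ => axb_le_kappa G net ane aopt r j
      _ = n := sum_kappa net

lemma mem_sel_of_sig_mem (r : Fin G.m)
    (ht : sig G net ane aopt r ∈ Iset n k net.κ) :
    1 ≤ G.cnt ane Finset.univ r + G.cnt aopt Finset.univ r := by
  simp only [Iset, Finset.mem_filter, Finset.mem_univ, true_and] at ht
  have := sum_axb G net ane aopt r
  omega

end ThetaAux
namespace ThetaAux

variable {n k : ℕ} (G : RAGame n) (net : Network n k) (ane aopt : Fin n → Finset (Fin G.m))

/-- the set of selected resources -/
def sel : Finset (Fin G.m) :=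
  Finset.univ.filter fun r => 1 ≤ G.cnt ane Finset.univ r + G.cnt aopt Finset.univ r

lemma sum_theta (g : Idx n k → ℝ) :
    ∑ t ∈ (Iset n k net.κ).attach, g t.1 * θof G net ane aopt t.1
      = ∑ r ∈ sel G ane aopt, G.v r * g (sig G net ane aopt r) := by
  rw [Finset.sum_attach (Iset n k net.κ) (fun t => g t * θof G net ane aopt t)]
  have key : ∀ t ∈ Iset n k net.κ,
      g t * θof G net ane aopt t
        = ∑ r ∈ (sel G ane aopt).filter (fun r => sig G net ane aopt r = t),
            G.v r * g (sig G net ane aopt r) := by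
    intro t ht
    rw [θof, Finset.mul_sum]
    have hset : Rt G net ane aopt t
        = (sel G ane aopt).filter (fun r => sig G net ane aopt r = t) := by
      ext r
      simp only [mem_Rt_iff, sel, Finset.mem_filter, Finset.mem_univ, true_and]
      constructor
      · intro h
        exact ⟨mem_sel_of_sig_mem G net ane aopt r (h ▸ ht), h⟩
      · exact fun h => h.2
    rw [hset]
    refine Finset.sum_congr rfl fun r hr => ?_
    rw [(Finset.mem_filter.1 hr).2, mul_comm]
  rw [Finset.sum_congr rfl key]
  exact Finset.sum_fiberwise_of_maps_to
    (fun r hr => sig_mem_Iset G net ane aopt r (by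
      simpa [sel] using hr)) _

lemma sum_theta_univ (g : Idx n k → ℝ) (F : Fin G.m → ℝ)
    (hF : ∀ r, G.v r * g (sig G net ane aopt r) = F r)
    (h0 : ∀ r, G.cnt ane Finset.univ r = 0 → G.cnt aopt Finset.univ r = 0 → F r = 0) :
    ∑ t ∈ (Iset n k net.κ).attach, g t.1 * θof G net ane aopt t.1 = ∑ r, F r := by
  rw [sum_theta]
  rw [Finset.sum_congr rfl (fun r _ => hF r)]
  refine Finset.sum_subset (Finset.filter_subset _ _) fun r _ hr => ?_
  simp only [sel, Finset.mem_filter, Finset.mem_univ, true_and, not_le, Nat.lt_one_iff] at hr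
  exact h0 r (by omega) (by omega)

end ThetaAux
namespace ThetaAux

variable {n k : ℕ} (G : RAGame n) (net : Network n k) (ane aopt : Fin n → Finset (Fin G.m))

lemma sum_univ_ite (s : Finset (Fin G.m)) (F : Fin G.m → ℝ) :
    ∑ r ∈ s, F r = ∑ r, if r ∈ s then F r else 0 := by
  rw [Finset.sum_ite_mem, Finset.univ_inter]

lemma cnt_update (a : Fin n → Finset (Fin G.m)) (b : Finset (Fin G.m)) (i : Fin n)
    (S : Finset (Fin n)) (hi : i ∈ S) (r : Fin G.m) :
    G.cnt (Function.update a i b) S r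
      = G.cnt a (S.erase i) r + (if r ∈ b then 1 else 0) := by
  unfold RAGame.cnt
  have hfe : (S.erase i).filter (fun i' => r ∈ Function.update a i b i')
      = (S.erase i).filter (fun i' => r ∈ a i') := by
    refine Finset.filter_congr fun i' hi' => ?_
    rw [Function.update_of_ne (Finset.ne_of_mem_erase hi')]
  conv_lhs => rw [← Finset.insert_erase hi]
  rw [Finset.filter_insert]
  by_cases hb : r ∈ Function.update a i b i
  · rw [if_pos hb, Finset.card_insert_of_notMem (fun h => (Finset.notMem_erase i S)
      (Finset.mem_of_mem_filter i h)), hfe]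
    simp only [Function.update_self] at hb
    rw [if_pos hb]
  · rw [if_neg hb, hfe]
    simp only [Function.update_self] at hb
    rw [if_neg hb, add_zero]

lemma cnt_self (a : Fin n → Finset (Fin G.m)) (i : Fin n)
    (S : Finset (Fin n)) (hi : i ∈ S) (r : Fin G.m) :
    G.cnt a S r = G.cnt a (S.erase i) r + (if r ∈ a i then 1 else 0) := by
  have := cnt_update G a (a i) i S hi r
  rwa [Function.update_eq_self] at this

/-- the Nash inequality for agent `i` of class `j`, in resource-summed form -/
lemma nash_ineq (f : Fin k → ℕ → ℝ) (hane : G.IsNash net f ane) (haopt : G.IsProfile aopt)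
    (i : Fin n) :
    ∑ r, (if r ∈ aopt i then
            (if r ∈ ane i then G.v r * f (net.cls i) (G.cnt ane (net.Nb (net.cls i)) r)
             else G.v r * f (net.cls i) (G.cnt ane (net.Nb (net.cls i)) r + 1)) else 0)
      ≤ ∑ r, (if r ∈ ane i then
            G.v r * f (net.cls i) (G.cnt ane (net.Nb (net.cls i)) r) else 0) := by
  have hN := hane.2 i (aopt i) (haopt i)
  have hiNb : i ∈ net.Nb (net.cls i) := net.mem_Nb i
  calc ∑ r, (if r ∈ aopt i then
            (if r ∈ ane i then G.v r * f (net.cls i) (G.cnt ane (net.Nb (net.cls i)) r)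
             else G.v r * f (net.cls i) (G.cnt ane (net.Nb (net.cls i)) r + 1)) else 0)
      = G.util net f (Function.update ane i (aopt i)) i := by
        simp only [RAGame.util, Function.update_self]
        rw [sum_univ_ite G (aopt i) (fun r => G.v r * f (net.cls i)
          (G.cnt (Function.update ane i (aopt i)) (net.Nb (net.cls i)) r))]
        refine Finset.sum_congr rfl fun r _ => ?_
        by_cases hr : r ∈ aopt i
        · rw [if_pos hr, if_pos hr]
          have hcnt := cnt_update G ane (aopt i) i (net.Nb (net.cls i)) hiNb r
          have hcnt2 := cnt_self G ane i (net.Nb (net.cls i)) hiNb r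
          have harg : G.cnt (Function.update ane i (aopt i)) (net.Nb (net.cls i)) r
              = (if r ∈ ane i then G.cnt ane (net.Nb (net.cls i)) r
                 else G.cnt ane (net.Nb (net.cls i)) r + 1) := by
            rw [hcnt, if_pos hr]
            by_cases he : r ∈ ane i
            · rw [if_pos he, hcnt2, if_pos he]
            · rw [if_neg he, hcnt2, if_neg he]
          rw [harg]
          by_cases he : r ∈ ane i
          · rw [if_pos he, if_pos he]
          · rw [if_neg he, if_neg he]
        · rw [if_neg hr, if_neg hr]
    _ ≤ G.util net f ane i := hN
    _ = _ := by
        rw [RAGame.util, sum_univ_ite G (ane i) (fun r => G.v r * f (net.cls i)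
          (G.cnt ane (net.Nb (net.cls i)) r))]

end ThetaAux
namespace ThetaAux

variable {n k : ℕ} (G : RAGame n) (net : Network n k) (ane aopt : Fin n → Finset (Fin G.m))

lemma nash_class (f : Fin k → ℕ → ℝ) (hane : G.IsNash net f ane)
    (haopt : G.IsProfile aopt) (j : Fin k) :
    0 ≤ ∑ r, G.v r *
        (((G.cnt ane (net.classSet j) r : ℝ) - (xc G net ane aopt j r : ℝ))
            * f j (G.cnt ane (net.Nb j) r)
          - ((G.cnt aopt (net.classSet j) r : ℝ) - (xc G net ane aopt j r : ℝ))
            * f j (G.cnt ane (net.Nb j) r + 1)) := by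
  set N : Fin G.m → ℕ := fun r => G.cnt ane (net.Nb j) r with hN
  have key : ∀ i ∈ net.classSet j,
      ∑ r, (if r ∈ aopt i then
              (if r ∈ ane i then G.v r * f j (N r) else G.v r * f j (N r + 1)) else 0)
        ≤ ∑ r, (if r ∈ ane i then G.v r * f j (N r) else 0) := by
    intro i hi
    have hcls : net.cls i = j := (Finset.mem_filter.1 hi).2
    have h := nash_ineq G net ane aopt f hane haopt i
    rwa [hcls] at h
  have hsum := Finset.sum_le_sum key
  have e1 : ∀ r, ∑ i ∈ net.classSet j, (if r ∈ ane i then G.v r * f j (N r) else 0)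
      = (G.cnt ane (net.classSet j) r : ℝ) * (G.v r * f j (N r)) := by
    intro r
    rw [← Finset.sum_filter, Finset.sum_const, nsmul_eq_mul]
    rfl
  have e2 : ∀ r, ∑ i ∈ net.classSet j, (if r ∈ aopt i then
        (if r ∈ ane i then G.v r * f j (N r) else G.v r * f j (N r + 1)) else 0)
      = (xc G net ane aopt j r : ℝ) * (G.v r * f j (N r))
        + ((G.cnt aopt (net.classSet j) r : ℝ) - (xc G net ane aopt j r : ℝ))
            * (G.v r * f j (N r + 1)) := by
    intro r
    rw [← Finset.sum_filter, Finset.sum_ite, Finset.sum_const, Finset.sum_const,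
      nsmul_eq_mul, nsmul_eq_mul, Finset.filter_filter, Finset.filter_filter]
    have hc1 : ((net.classSet j).filter (fun i => r ∈ aopt i ∧ r ∈ ane i)).card
        = xc G net ane aopt j r := by
      rw [xc]
      congr 1
      ext i
      simp [and_comm]
    have hc2 : ((net.classSet j).filter (fun i => r ∈ aopt i ∧ r ∈ ane i)).card
        + ((net.classSet j).filter (fun i => r ∈ aopt i ∧ ¬ r ∈ ane i)).card
        = G.cnt aopt (net.classSet j) r := by
      have := Finset.card_filter_add_card_filter_not
        (s := (net.classSet j).filter (fun i => r ∈ aopt i)) (p := fun i => r ∈ ane i)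
      rw [Finset.filter_filter, Finset.filter_filter] at this
      exact this
    have hc2' : (((net.classSet j).filter (fun i => r ∈ aopt i ∧ ¬ r ∈ ane i)).card : ℝ)
        = (G.cnt aopt (net.classSet j) r : ℝ) - (xc G net ane aopt j r : ℝ) := by
      rw [← hc1, ← hc2]
      push_cast
      ring
    rw [hc1, hc2']
  have hRL : ∑ r, G.v r *
        (((G.cnt ane (net.classSet j) r : ℝ) - (xc G net ane aopt j r : ℝ)) * f j (N r)
          - ((G.cnt aopt (net.classSet j) r : ℝ) - (xc G net ane aopt j r : ℝ))
            * f j (N r + 1))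
      = (∑ i ∈ net.classSet j, ∑ r, (if r ∈ ane i then G.v r * f j (N r) else 0))
        - ∑ i ∈ net.classSet j, ∑ r, (if r ∈ aopt i then
            (if r ∈ ane i then G.v r * f j (N r) else G.v r * f j (N r + 1)) else 0) := by
    rw [Finset.sum_comm (s := net.classSet j)
        (f := fun i r => if r ∈ ane i then G.v r * f j (N r) else 0),
      Finset.sum_comm (s := net.classSet j)
        (f := fun i r => if r ∈ aopt i then
          (if r ∈ ane i then G.v r * f j (N r) else G.v r * f j (N r + 1)) else 0),
      ← Finset.sum_sub_distrib]
    refine Finset.sum_congr rfl fun r _ => ?_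
    rw [e1 r, e2 r]
    ring
  rw [hRL]
  exact sub_nonneg.2 hsum

end ThetaAux
lemma cnt_mono {n : ℕ} (G : RAGame n) (a : Fin n → Finset (Fin G.m)) (S : Finset (Fin n))
    (r : Fin G.m) : G.cnt a S r ≤ G.cnt a Finset.univ r :=
  Finset.card_le_card (Finset.filter_subset_filter _ (Finset.subset_univ _))

/-- `θ` built from a pure Nash equilibrium with `W(a^ne) = 1` and any profile
`a^opt` is feasible for the primal LP, with objective value `W(a^opt)`. -/
theorem theta_primal_feasible {n k : ℕ} (w : ℕ → ℝ) (hw : IsBasis n w) (net : Network n k)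
    (f : Fin k → ℕ → ℝ) (hf : IsMech net f) (G : RAGame n)
    (ane aopt : Fin n → Finset (Fin G.m))
    (hane : G.IsNash net f ane) (hone : G.welf w ane = 1) (haopt : G.IsProfile aopt) :
    PrimalFeasible n k net w f (fun t => θof G net ane aopt t.1) ∧
    primalObj n k net.κ w (fun t => θof G net ane aopt t.1) = G.welf w aopt := by
  classical
  have castA : ∀ (r : Fin G.m) (j : Fin k),
      ((aI (ThetaAux.sig G net ane aopt r) j : ℕ) : ℝ)
        = (G.cnt ane (net.classSet j) r : ℝ) - (ThetaAux.xc G net ane aopt j r : ℝ) := by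
    intro r j
    have h : aI (ThetaAux.sig G net ane aopt r) j
        = G.cnt ane (net.classSet j) r - ThetaAux.xc G net ane aopt j r := rfl
    rw [h, Nat.cast_sub (ThetaAux.xc_le_ne G net ane aopt j r)]
  have castB : ∀ (r : Fin G.m) (j : Fin k),
      ((bI (ThetaAux.sig G net ane aopt r) j : ℕ) : ℝ)
        = (G.cnt aopt (net.classSet j) r : ℝ) - (ThetaAux.xc G net ane aopt j r : ℝ) := by
    intro r j
    have h : bI (ThetaAux.sig G net ane aopt r) j
        = G.cnt aopt (net.classSet j) r - ThetaAux.xc G net ane aopt j r := rfl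
    rw [h, Nat.cast_sub (ThetaAux.xc_le_opt G net ane aopt j r)]
  refine ⟨⟨fun t => Finset.sum_nonneg fun r _ => G.v_nonneg r, fun j => ?_, ?_⟩, ?_⟩
  · -- the Nash constraint for class j
    have htrans := ThetaAux.sum_theta_univ G net ane aopt
      (fun t => (aI t j : ℝ) * f j (Atj net t j) - (bI t j : ℝ) * f j (Atj net t j + 1))
      (fun r => G.v r *
        (((G.cnt ane (net.classSet j) r : ℝ) - (ThetaAux.xc G net ane aopt j r : ℝ))
            * f j (G.cnt ane (net.Nb j) r)
          - ((G.cnt aopt (net.classSet j) r : ℝ) - (ThetaAux.xc G net ane aopt j r : ℝ))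
            * f j (G.cnt ane (net.Nb j) r + 1)))
      (fun r => by
        rw [ThetaAux.Atj_sig, castA r j, castB r j])
      (fun r h1 h2 => by
        have ha : G.cnt ane (net.classSet j) r = 0 := by
          have := cnt_mono G ane (net.classSet j) r; omega
        have hb : G.cnt aopt (net.classSet j) r = 0 := by
          have := cnt_mono G aopt (net.classSet j) r; omega
        have hx : ThetaAux.xc G net ane aopt j r = 0 := by
          have := ThetaAux.xc_le_ne G net ane aopt j r; omega
        rw [ha, hb, hx]
        norm_num)
    exact le_of_le_of_eq (ThetaAux.nash_class G net ane aopt f hane haopt j) htrans.symm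
  · have htrans := ThetaAux.sum_theta_univ G net ane aopt
      (fun t => w (AtI t)) (fun r => G.v r * w (G.cnt ane Finset.univ r))
      (fun r => by rw [ThetaAux.AtI_sig])
      (fun r h1 h2 => by rw [h1, hw.1, mul_zero])
    exact htrans.trans hone
  · have htrans := ThetaAux.sum_theta_univ G net ane aopt
      (fun t => w (BtI t)) (fun r => G.v r * w (G.cnt aopt Finset.univ r))
      (fun r => by rw [ThetaAux.BtI_sig])
      (fun r h1 h2 => by rw [h2, hw.1, mul_zero])
    exact htrans
end

section
/- (Lemma 2.) Fix n, a basis function w, a network (𝓒,𝓝), and a mechanism f with f_j(1) > 0 for every j. For every θ : 𝓘 → ℝ feasible for the primal LP (θ(t) ≥ 0 for all t, Σ_{t∈𝓘} [a_j f_j(A_{t,j}) − b_j f_j(A_{t,j}+1)] θ(t) ≥ 0 for every j, and Σ_{t∈𝓘} w(A_t) θ(t) = 1), there exists a resource allocation game G ∈ 𝓖 with this n, w, (𝓒,𝓝), f, an action profile a^ne of G that is a pure Nash equilibrium with W(a^ne) = 1, and an action profile a^opt of G with W(a^opt) = Σ_{t∈𝓘} w(B_t) θ(t). Consequently the supremum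 of W(a^opt) over games in 𝓖, pure Nash equilibria a^ne with W(a^ne) = 1 and profiles a^opt is at least the primal LP value W*. -/
open Finset

open Finset

namespace L2Aux

noncomputable section

lemma kappa_pos {n k : ℕ} (net : Network n k) (j : Fin k) : 0 < net.κ j := by
  obtain ⟨i, hi⟩ := net.cls_surj j
  exact Finset.card_pos.mpr ⟨i, by simp [Network.classSet, hi]⟩

instance {n k : ℕ} (net : Network n k) (j : Fin k) : NeZero (net.κ j) :=
  ⟨(kappa_pos net j).ne'⟩

/-- window count in `ZMod κ` -/
lemma zmod_window_card (κ : ℕ) [NeZero κ] (p : ZMod κ) (lo hi : ℕ) (hhi : hi ≤ κ) :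
    (univ.filter fun z : ZMod κ => lo ≤ (p - z).val ∧ (p - z).val < hi).card = hi - lo := by
  rw [← Nat.card_Ico lo hi]
  apply Finset.card_nbij (fun z => (p - z).val)
  · intro z hz
    simp only [coe_filter, Set.mem_setOf_eq, mem_coe, mem_filter, mem_univ, true_and] at hz
    simpa [Finset.mem_Ico] using hz
  · intro z hz z' hz' h
    have h2 : p - z = p - z' := ZMod.val_injective κ h
    have := sub_right_injective h2
    simpa using this
  · intro c hc
    simp only [Finset.coe_Ico, Set.mem_Ico] at hc
    have hcκ : c < κ := lt_of_lt_of_le hc.2 hhi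
    refine ⟨p - (c : ZMod κ), ?_, ?_⟩
    · simp only [coe_filter, Set.mem_setOf_eq, mem_coe, mem_filter, mem_univ, true_and]
      rw [sub_sub_cancel, ZMod.val_cast_of_lt hcκ]
      exact ⟨hc.1, hc.2⟩
    · show (p - (p - (c:ZMod κ))).val = c
      rw [sub_sub_cancel, ZMod.val_cast_of_lt hcκ]

/-- position of agent `i` within class `j`, as an element of `ZMod (κ j)` -/
noncomputable def posZ {n k : ℕ} (net : Network n k) (j : Fin k) (i : Fin n) : ZMod (net.κ j) :=
  if h : i ∈ net.classSet j then ((((net.classSet j).equivFin ⟨i, h⟩ : Fin _) : ℕ) : ZMod (net.κ j))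
  else 0

lemma posZ_inj {n k : ℕ} (net : Network n k) (j : Fin k) {i i' : Fin n}
    (hi : i ∈ net.classSet j) (hi' : i' ∈ net.classSet j) (h : posZ net j i = posZ net j i') :
    i = i' := by
  rw [posZ, posZ, dif_pos hi, dif_pos hi'] at h
  have h1 : (((net.classSet j).equivFin ⟨i, hi⟩ : Fin _) : ℕ)
      = (((net.classSet j).equivFin ⟨i', hi'⟩ : Fin _) : ℕ) := by
    have e1 := ZMod.val_cast_of_lt (n := net.κ j)
      (((net.classSet j).equivFin ⟨i, hi⟩ : Fin _).isLt)
    have e2 := ZMod.val_cast_of_lt (n := net.κ j)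
      (((net.classSet j).equivFin ⟨i', hi'⟩ : Fin _).isLt)
    rw [← e1, ← e2, h]
  have := (net.classSet j).equivFin.injective (Fin.ext h1)
  exact Subtype.ext_iff.mp this

lemma posZ_surj {n k : ℕ} (net : Network n k) (j : Fin k) (z : ZMod (net.κ j)) :
    ∃ i ∈ net.classSet j, posZ net j i = z := by
  have hz : z.val < net.κ j := z.val_lt
  set x := (net.classSet j).equivFin.symm ⟨z.val, hz⟩ with hx
  refine ⟨x.1, x.2, ?_⟩
  rw [posZ, dif_pos x.2]
  have h1 : (⟨x.1, x.2⟩ : {i // i ∈ net.classSet j}) = x := rfl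
  rw [h1, hx, (net.classSet j).equivFin.apply_symm_apply]
  exact ZMod.natCast_rightInverse.injective (by
    rw [ZMod.val_cast_of_lt hz])

/-- window count within a class -/
lemma class_window_card {n k : ℕ} (net : Network n k) (j : Fin k) (s : ZMod (net.κ j))
    (lo hi : ℕ) (hhi : hi ≤ net.κ j) :
    ((net.classSet j).filter fun i =>
        lo ≤ (posZ net j i - s).val ∧ (posZ net j i - s).val < hi).card = hi - lo := by
  rw [← Nat.card_Ico lo hi]
  apply Finset.card_nbij (fun i => (posZ net j i - s).val)
  · intro i hi
    simp only [coe_filter, Set.mem_setOf_eq, mem_coe, mem_filter] at hi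
    simpa [Finset.mem_Ico] using hi.2
  · intro i hi i' hi' h
    simp only [coe_filter, Set.mem_setOf_eq, mem_coe, mem_filter] at hi hi'
    have h2 : posZ net j i - s = posZ net j i' - s := ZMod.val_injective _ h
    exact posZ_inj net j hi.1 hi'.1 (by
      have := sub_left_injective h2
      exact this)
  · intro c hc
    simp only [Finset.coe_Ico, Set.mem_Ico] at hc
    have hcκ : c < net.κ j := lt_of_lt_of_le hc.2 hhi
    obtain ⟨i, hmem, hpos⟩ := posZ_surj net j (s + (c : ZMod (net.κ j)))
    have hval : (posZ net j i - s).val = c := by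
      rw [hpos, add_sub_cancel_left, ZMod.val_cast_of_lt hcκ]
    refine ⟨i, ?_, hval⟩
    simp only [coe_filter, Set.mem_setOf_eq, mem_coe, mem_filter]
    exact ⟨hmem, hval ▸ ⟨hc.1, hc.2⟩⟩

/-- marginal count over the shift space -/
lemma pi_window_card {n k : ℕ} (net : Network n k) (j : Fin k)
    (P : ZMod (net.κ j) → Prop) [DecidablePred P] :
    (univ.filter fun σ : (l : Fin k) → ZMod (net.κ l) => P (σ j)).card
      = (univ.filter P).card * ∏ l ∈ univ.erase j, net.κ l := by
  classical
  have heq : (univ.filter fun σ : (l : Fin k) → ZMod (net.κ l) => P (σ j)) =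
      Fintype.piFinset (fun l => if h : l = j then (univ.filter fun z => P (h ▸ z)) else univ) := by
    ext σ
    simp only [Fintype.mem_piFinset, mem_filter, mem_univ, true_and]
    constructor
    · intro h l
      by_cases hl : l = j
      · subst hl; simpa using h
      · simp [hl]
    · intro h
      have := h j
      simpa using this
  rw [heq, Fintype.card_piFinset, ← Finset.mul_prod_erase univ _ (mem_univ j)]
  congr 1
  · simp
  · refine Finset.prod_congr rfl fun l hl => ?_
    rw [dif_neg (mem_erase.mp hl).1]
    simp [ZMod.card]

/-- splitting a count over a union of classes -/
lemma cnt_split {n k : ℕ} (net : Network n k) (G : RAGame n) (a : Fin n → Finset (Fin G.m))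
    (S : Finset (Fin n)) (hS : ∀ i ∈ S, ∀ i', net.cls i' = net.cls i → i' ∈ S) (r : Fin G.m) :
    G.cnt a S r = ∑ j ∈ univ.filter (fun j => net.classSet j ⊆ S), G.cnt a (net.classSet j) r := by
  classical
  have hSeq : S = (univ.filter fun j => net.classSet j ⊆ S).biUnion net.classSet := by
    ext i
    simp only [mem_biUnion, mem_filter, mem_univ, true_and]
    constructor
    · intro hi
      refine ⟨net.cls i, fun i' hi' => ?_, by simp [Network.classSet]⟩
      · exact hS i hi i' (by simpa [Network.classSet] using hi')
    · rintro ⟨j, hj, hij⟩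
      exact hj hij
  have hdisj : ∀ x ∈ univ.filter (fun j => net.classSet j ⊆ S),
      ∀ y ∈ univ.filter (fun j => net.classSet j ⊆ S), x ≠ y →
      Disjoint (net.classSet x) (net.classSet y) := by
    intro x _ y _ hxy
    simp only [Finset.disjoint_left, Network.classSet, mem_filter, mem_univ, true_and]
    rintro i hx hy
    exact hxy (hx ▸ hy ▸ rfl)
  show (S.filter fun i => r ∈ a i).card = _
  conv_lhs => rw [hSeq]
  rw [Finset.filter_biUnion, Finset.card_biUnion]
  · rfl
  · intro x hx y hy hxy
    exact Finset.disjoint_filter_filter (hdisj x hx y hy hxy)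

/-- removing one agent from a count -/
lemma cnt_erase {n : ℕ} (G : RAGame n) (a : Fin n → Finset (Fin G.m))
    (S : Finset (Fin n)) (i : Fin n) (hi : i ∈ S) (r : Fin G.m) :
    G.cnt a S r = G.cnt a (S.erase i) r + if r ∈ a i then 1 else 0 := by
  classical
  have h1 : S = insert i (S.erase i) := (Finset.insert_erase hi).symm
  show (S.filter fun i' => r ∈ a i').card = ((S.erase i).filter fun i' => r ∈ a i').card + _
  conv_lhs => rw [h1]
  rw [Finset.filter_insert]
  by_cases hr : r ∈ a i
  · rw [if_pos hr, Finset.card_insert_of_notMem (by simp), if_pos hr]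
  · rw [if_neg hr, if_neg hr, add_zero]

/-- updating an absent agent does not change the count -/
lemma cnt_update_notmem {n : ℕ} (G : RAGame n) (a : Fin n → Finset (Fin G.m))
    (S : Finset (Fin n)) (i : Fin n) (hi : i ∉ S) (b : Finset (Fin G.m)) (r : Fin G.m) :
    G.cnt (Function.update a i b) S r = G.cnt a S r := by
  classical
  unfold RAGame.cnt
  congr 1
  apply Finset.filter_congr
  intro i' hi'
  rw [Function.update_of_ne (by rintro rfl; exact hi hi')]

variable {n k : ℕ}

abbrev TIdx (net : Network n k) : Type := {t : Idx n k // t ∈ Iset n k net.κ}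
abbrev Shift (net : Network n k) : Type := (l : Fin k) → ZMod (net.κ l)
abbrev Res (net : Network n k) : Type := TIdx net × Shift net

noncomputable def resE (net : Network n k) : Res net ≃ Fin (Fintype.card (Res net)) :=
  Fintype.equivFin _

def distOf (net : Network n k) (σ : Shift net) (j : Fin k) (i : Fin n) : ℕ :=
  (posZ net j i - σ j).val

def NEmem (net : Network n k) (ρ : Res net) (i : Fin n) : Prop :=
  distOf net ρ.2 (net.cls i) i < aI ρ.1.1 (net.cls i) + xI ρ.1.1 (net.cls i)

def OPTmem (net : Network n k) (ρ : Res net) (i : Fin n) : Prop :=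
  aI ρ.1.1 (net.cls i) ≤ distOf net ρ.2 (net.cls i) i ∧
    distOf net ρ.2 (net.cls i) i
      < aI ρ.1.1 (net.cls i) + xI ρ.1.1 (net.cls i) + bI ρ.1.1 (net.cls i)

instance (net : Network n k) (ρ : Res net) (i : Fin n) : Decidable (NEmem net ρ i) := by
  unfold NEmem; infer_instance

instance (net : Network n k) (ρ : Res net) (i : Fin n) : Decidable (OPTmem net ρ i) := by
  unfold OPTmem; infer_instance

noncomputable def aneOf (net : Network n k) (i : Fin n) :
    Finset (Fin (Fintype.card (Res net))) :=
  (univ.filter fun ρ : Res net => NEmem net ρ i).map (resE net).toEmbedding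

noncomputable def aoptOf (net : Network n k) (i : Fin n) :
    Finset (Fin (Fintype.card (Res net))) :=
  (univ.filter fun ρ : Res net => OPTmem net ρ i).map (resE net).toEmbedding

@[reducible] noncomputable def consG (net : Network n k) (θ : TIdx net → ℝ) (hθ : ∀ t, 0 ≤ θ t) :
    RAGame n where
  m := Fintype.card (Res net)
  v := fun r => θ ((resE net).symm r).1 / ((∏ l, net.κ l : ℕ) : ℝ)
  v_nonneg := fun r => div_nonneg (hθ _) (by positivity)
  act := fun i => {aneOf net i, aoptOf net i}
  act_nonempty := fun i => ⟨aneOf net i, by simp⟩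

lemma mem_aneOf (net : Network n k) (i : Fin n) (r : Fin (Fintype.card (Res net))) :
    r ∈ aneOf net i ↔ NEmem net ((resE net).symm r) i := by
  simp [aneOf, Finset.mem_map_equiv]

lemma mem_aoptOf (net : Network n k) (i : Fin n) (r : Fin (Fintype.card (Res net))) :
    r ∈ aoptOf net i ↔ OPTmem net ((resE net).symm r) i := by
  simp [aoptOf, Finset.mem_map_equiv]

lemma Iset_bounds {net : Network n k} (t : TIdx net) (j : Fin k) :
    aI t.1 j + xI t.1 j + bI t.1 j ≤ net.κ j := by
  have := (Finset.mem_filter.mp t.2).2.1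
  exact this j

/-- number of class-`j` agents using resource `ρ` in the equilibrium profile -/
lemma cnt_class_ne (net : Network n k) (θ : TIdx net → ℝ) (hθ : ∀ t, 0 ≤ θ t)
    (ρ : Res net) (j : Fin k) :
    (consG net θ hθ).cnt (fun i => aneOf net i) (net.classSet j) (resE net ρ)
      = aI ρ.1.1 j + xI ρ.1.1 j := by
  classical
  show ((net.classSet j).filter fun i => resE net ρ ∈ aneOf net i).card = _
  have heq : ((net.classSet j).filter fun i => resE net ρ ∈ aneOf net i)
      = (net.classSet j).filter fun i =>
          0 ≤ (posZ net j i - ρ.2 j).val ∧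
            (posZ net j i - ρ.2 j).val < aI ρ.1.1 j + xI ρ.1.1 j := by
    apply Finset.filter_congr
    intro i hi
    have hcls : net.cls i = j := by
      simpa [Network.classSet] using hi
    subst hcls
    rw [mem_aneOf, Equiv.symm_apply_apply]
    simp [NEmem, distOf]
  rw [heq, class_window_card net j (ρ.2 j) 0 _ ?_]
  · omega
  · have := Iset_bounds ρ.1 j; omega

/-- number of class-`j` agents using resource `ρ` in the optimal profile -/
lemma cnt_class_opt (net : Network n k) (θ : TIdx net → ℝ) (hθ : ∀ t, 0 ≤ θ t)
    (ρ : Res net) (j : Fin k) :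
    (consG net θ hθ).cnt (fun i => aoptOf net i) (net.classSet j) (resE net ρ)
      = bI ρ.1.1 j + xI ρ.1.1 j := by
  classical
  show ((net.classSet j).filter fun i => resE net ρ ∈ aoptOf net i).card = _
  have heq : ((net.classSet j).filter fun i => resE net ρ ∈ aoptOf net i)
      = (net.classSet j).filter fun i =>
          aI ρ.1.1 j ≤ (posZ net j i - ρ.2 j).val ∧
            (posZ net j i - ρ.2 j).val < aI ρ.1.1 j + xI ρ.1.1 j + bI ρ.1.1 j := by
    apply Finset.filter_congr
    intro i hi
    have hcls : net.cls i = j := by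
      simpa [Network.classSet] using hi
    subst hcls
    rw [mem_aoptOf, Equiv.symm_apply_apply]
    simp [OPTmem, distOf]
  rw [heq, class_window_card net j (ρ.2 j) _ _ (Iset_bounds ρ.1 j)]
  omega

lemma cnt_ne_Nb (net : Network n k) (θ : TIdx net → ℝ) (hθ : ∀ t, 0 ≤ θ t)
    (ρ : Res net) (j : Fin k) :
    (consG net θ hθ).cnt (fun i => aneOf net i) (net.Nb j) (resE net ρ) = Atj net ρ.1.1 j := by
  rw [cnt_split net _ _ _ (fun i hi i' h => net.Nb_union j i i' h.symm hi)]
  exact Finset.sum_congr rfl fun l _ => cnt_class_ne net θ hθ ρ l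

lemma cnt_ne_univ (net : Network n k) (θ : TIdx net → ℝ) (hθ : ∀ t, 0 ≤ θ t) (ρ : Res net) :
    (consG net θ hθ).cnt (fun i => aneOf net i) univ (resE net ρ) = AtI ρ.1.1 := by
  rw [cnt_split net _ _ univ (fun i _ i' _ => mem_univ i'),
    Finset.filter_true_of_mem (fun j _ => Finset.subset_univ _)]
  exact Finset.sum_congr rfl fun l _ => cnt_class_ne net θ hθ ρ l

lemma cnt_opt_univ (net : Network n k) (θ : TIdx net → ℝ) (hθ : ∀ t, 0 ≤ θ t) (ρ : Res net) :
    (consG net θ hθ).cnt (fun i => aoptOf net i) univ (resE net ρ) = BtI ρ.1.1 := by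
  rw [cnt_split net _ _ univ (fun i _ i' _ => mem_univ i'),
    Finset.filter_true_of_mem (fun j _ => Finset.subset_univ _)]
  exact Finset.sum_congr rfl fun l _ => cnt_class_opt net θ hθ ρ l

lemma card_shift (net : Network n k) : Fintype.card (Shift net) = ∏ l, net.κ l := by
  simp [ZMod.card]

lemma prodκ_ne (net : Network n k) : ((∏ l, net.κ l : ℕ) : ℝ) ≠ 0 :=
  ne_of_gt (by exact_mod_cast Finset.prod_pos fun l _ => kappa_pos net l)

lemma welf_eq (net : Network n k) (θ : TIdx net → ℝ) (hθ : ∀ t, 0 ≤ θ t) (w : ℕ → ℝ)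
    (a : Fin n → Finset (Fin (consG net θ hθ).m)) (g : Idx n k → ℕ)
    (hcnt : ∀ ρ : Res net, (consG net θ hθ).cnt a univ (resE net ρ) = g ρ.1.1) :
    (consG net θ hθ).welf w a = ∑ t ∈ (Iset n k net.κ).attach, w (g t.1) * θ t := by
  classical
  show (∑ r : Fin (Fintype.card (Res net)), (consG net θ hθ).v r * w ((consG net θ hθ).cnt a univ r)) = _
  rw [← Equiv.sum_comp (resE net)
    (fun r => (consG net θ hθ).v r * w ((consG net θ hθ).cnt a univ r))]
  have h1 : ∀ ρ : Res net, (consG net θ hθ).v (resE net ρ) * w ((consG net θ hθ).cnt a univ (resE net ρ))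
      = (θ ρ.1 / ((∏ l, net.κ l : ℕ) : ℝ)) * w (g ρ.1.1) := by
    intro ρ
    rw [hcnt ρ]
    congr 2
    show θ ((resE net).symm (resE net ρ)).1 / _ = _
    rw [Equiv.symm_apply_apply]
  rw [Finset.sum_congr rfl fun ρ _ => h1 ρ, Fintype.sum_prod_type]
  have h2 : ∀ t : TIdx net,
      (∑ _σ : Shift net, (θ t / ((∏ l, net.κ l : ℕ) : ℝ)) * w (g t.1)) = w (g t.1) * θ t := by
    intro t
    rw [Finset.sum_const, Finset.card_univ, card_shift, nsmul_eq_mul]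
    have h3 : ((∏ l, net.κ l : ℕ) : ℝ) * (θ t / ((∏ l, net.κ l : ℕ) : ℝ)) = θ t := by
      rw [mul_comm, div_mul_cancel₀ _ (prodκ_ne net)]
    rw [← mul_assoc, h3, mul_comm]
  rw [Finset.sum_congr rfl fun t _ => h2 t]
  exact Finset.sum_congr (Finset.univ_eq_attach _) (fun _ _ => rfl)

lemma util_eq_sum (net : Network n k) (θ : TIdx net → ℝ) (hθ : ∀ t, 0 ≤ θ t)
    (f : Fin k → ℕ → ℝ) (a : Fin n → Finset (Fin (consG net θ hθ).m)) (i : Fin n) :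
    (consG net θ hθ).util net f a i
      = ∑ ρ : Res net, (if resE net ρ ∈ a i then
          (θ ρ.1 / ((∏ l, net.κ l : ℕ) : ℝ)) *
            f (net.cls i) ((consG net θ hθ).cnt a (net.Nb (net.cls i)) (resE net ρ))
        else 0) := by
  classical
  show (∑ r ∈ a i, (consG net θ hθ).v r *
      f (net.cls i) ((consG net θ hθ).cnt a (net.Nb (net.cls i)) r)) = _
  have h0 : ∑ r ∈ a i, (consG net θ hθ).v r *
        f (net.cls i) ((consG net θ hθ).cnt a (net.Nb (net.cls i)) r)
      = ∑ r : Fin (Fintype.card (Res net)), (if r ∈ a i then (consG net θ hθ).v r *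
          f (net.cls i) ((consG net θ hθ).cnt a (net.Nb (net.cls i)) r) else 0) := by
    rw [Finset.sum_ite_mem, Finset.univ_inter]
  rw [h0, ← Equiv.sum_comp (resE net)]
  refine Finset.sum_congr rfl fun ρ _ => ?_
  congr 1
  show θ ((resE net).symm (resE net ρ)).1 / _ * _ = _
  rw [Equiv.symm_apply_apply]

lemma shift_count (net : Network n k) (j : Fin k) (p : ZMod (net.κ j)) (lo hi : ℕ)
    (hhi : hi ≤ net.κ j) :
    (univ.filter fun σ : Shift net => lo ≤ (p - σ j).val ∧ (p - σ j).val < hi).card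
      = (hi - lo) * ∏ l ∈ univ.erase j, net.κ l := by
  rw [pi_window_card net j (fun z => lo ≤ (p - z).val ∧ (p - z).val < hi),
    zmod_window_card _ p lo hi hhi]

/-- equilibrium utility of agent `i` -/
lemma util_ne (net : Network n k) (θ : TIdx net → ℝ) (hθ : ∀ t, 0 ≤ θ t)
    (f : Fin k → ℕ → ℝ) (i : Fin n) :
    (consG net θ hθ).util net f (fun i' => aneOf net i') i
      = ∑ t ∈ (Iset n k net.κ).attach,
          (((aI t.1 (net.cls i) + xI t.1 (net.cls i)) * ∏ l ∈ univ.erase (net.cls i), net.κ l : ℕ) : ℝ)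
            * (θ t / ((∏ l, net.κ l : ℕ) : ℝ)) * f (net.cls i) (Atj net t.1 (net.cls i)) := by
  classical
  set j := net.cls i with hj
  rw [util_eq_sum]
  have h1 : ∀ ρ : Res net, (if resE net ρ ∈ aneOf net i then
        (θ ρ.1 / ((∏ l, net.κ l : ℕ) : ℝ)) *
          f j ((consG net θ hθ).cnt (fun i' => aneOf net i') (net.Nb j) (resE net ρ))
      else 0)
      = (if NEmem net ρ i then (θ ρ.1 / ((∏ l, net.κ l : ℕ) : ℝ)) * f j (Atj net ρ.1.1 j) else 0) := by
    intro ρ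
    by_cases h : NEmem net ρ i
    · rw [if_pos (by rw [mem_aneOf, Equiv.symm_apply_apply]; exact h), if_pos h,
        cnt_ne_Nb net θ hθ ρ j]
    · rw [if_neg (by rw [mem_aneOf, Equiv.symm_apply_apply]; exact h), if_neg h]
  rw [Finset.sum_congr rfl fun ρ _ => h1 ρ, Fintype.sum_prod_type]
  have h2 : ∀ t : TIdx net,
      (∑ σ : Shift net, if NEmem net (t, σ) i then
          (θ t / ((∏ l, net.κ l : ℕ) : ℝ)) * f j (Atj net t.1 j) else 0)
      = (((aI t.1 j + xI t.1 j) * ∏ l ∈ univ.erase j, net.κ l : ℕ) : ℝ)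
          * ((θ t / ((∏ l, net.κ l : ℕ) : ℝ)) * f j (Atj net t.1 j)) := by
    intro t
    rw [← Finset.sum_filter, Finset.sum_const, nsmul_eq_mul]
    congr 1
    have hfe : (univ.filter fun σ : Shift net => NEmem net (t, σ) i)
        = univ.filter fun σ : Shift net =>
            0 ≤ (posZ net j i - σ j).val ∧ (posZ net j i - σ j).val < aI t.1 j + xI t.1 j := by
      refine Finset.filter_congr fun σ _ => ?_
      show NEmem net (t, σ) i ↔ _
      unfold NEmem distOf
      simp
      rfl
    rw [hfe, shift_count net j (posZ net j i) 0 _ (by have := Iset_bounds t j; omega)]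
    norm_cast
  rw [Finset.sum_congr rfl fun t _ => h2 t]
  refine Eq.trans (Finset.sum_congr (Finset.univ_eq_attach _) (fun t _ => ?_)) rfl
  ring

/-- count on the observed set after agent `i` deviates to its optimal action -/
lemma cnt_dev_Nb (net : Network n k) (θ : TIdx net → ℝ) (hθ : ∀ t, 0 ≤ θ t)
    (i : Fin n) (ρ : Res net) (hρ : OPTmem net ρ i) :
    (consG net θ hθ).cnt (Function.update (fun i' => aneOf net i') i (aoptOf net i))
        (net.Nb (net.cls i)) (resE net ρ)
      = if NEmem net ρ i then Atj net ρ.1.1 (net.cls i) else Atj net ρ.1.1 (net.cls i) + 1 := by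
  classical
  set j := net.cls i with hj
  have hiNb : i ∈ net.Nb j := net.mem_Nb i
  have h1 := cnt_erase (consG net θ hθ)
    (Function.update (fun i' => aneOf net i') i (aoptOf net i)) (net.Nb j) i hiNb (resE net ρ)
  rw [cnt_update_notmem (consG net θ hθ) (fun i' => aneOf net i') _ i
    (Finset.notMem_erase i _) (aoptOf net i) (resE net ρ), Function.update_self] at h1
  rw [if_pos (by rw [mem_aoptOf, Equiv.symm_apply_apply]; exact hρ)] at h1
  have h2 := cnt_erase (consG net θ hθ) (fun i' => aneOf net i') (net.Nb j) i hiNb (resE net ρ)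
  rw [cnt_ne_Nb net θ hθ ρ j] at h2
  by_cases hne : NEmem net ρ i
  · rw [if_pos (by rw [mem_aneOf, Equiv.symm_apply_apply]; exact hne)] at h2
    rw [if_pos hne]
    omega
  · rw [if_neg (by rw [mem_aneOf, Equiv.symm_apply_apply]; exact hne)] at h2
    rw [if_neg hne]
    omega

/-- deviation utility of agent `i` -/
lemma util_dev (net : Network n k) (θ : TIdx net → ℝ) (hθ : ∀ t, 0 ≤ θ t)
    (f : Fin k → ℕ → ℝ) (i : Fin n) :
    (consG net θ hθ).util net f (Function.update (fun i' => aneOf net i') i (aoptOf net i)) i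
      = ∑ t ∈ (Iset n k net.κ).attach,
          ((((xI t.1 (net.cls i)) * ∏ l ∈ univ.erase (net.cls i), net.κ l : ℕ) : ℝ)
              * (θ t / ((∏ l, net.κ l : ℕ) : ℝ)) * f (net.cls i) (Atj net t.1 (net.cls i))
            + (((bI t.1 (net.cls i)) * ∏ l ∈ univ.erase (net.cls i), net.κ l : ℕ) : ℝ)
              * (θ t / ((∏ l, net.κ l : ℕ) : ℝ)) * f (net.cls i) (Atj net t.1 (net.cls i) + 1)) := by
  classical
  set j := net.cls i with hj
  rw [util_eq_sum]
  have h1 : ∀ ρ : Res net, (if resE net ρ ∈ Function.update (fun i' => aneOf net i') i (aoptOf net i) i then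
        (θ ρ.1 / ((∏ l, net.κ l : ℕ) : ℝ)) *
          f j ((consG net θ hθ).cnt (Function.update (fun i' => aneOf net i') i (aoptOf net i))
            (net.Nb j) (resE net ρ))
      else 0)
      = ((if (aI ρ.1.1 j ≤ distOf net ρ.2 j i ∧ distOf net ρ.2 j i < aI ρ.1.1 j + xI ρ.1.1 j) then
            (θ ρ.1 / ((∏ l, net.κ l : ℕ) : ℝ)) * f j (Atj net ρ.1.1 j) else 0)
        + (if (aI ρ.1.1 j + xI ρ.1.1 j ≤ distOf net ρ.2 j i
              ∧ distOf net ρ.2 j i < aI ρ.1.1 j + xI ρ.1.1 j + bI ρ.1.1 j) then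
            (θ ρ.1 / ((∏ l, net.κ l : ℕ) : ℝ)) * f j (Atj net ρ.1.1 j + 1) else 0)) := by
    intro ρ
    rw [Function.update_self]
    by_cases hopt : OPTmem net ρ i
    · rw [if_pos (by rw [mem_aoptOf, Equiv.symm_apply_apply]; exact hopt),
        cnt_dev_Nb net θ hθ i ρ hopt]
      have hd := hopt
      unfold OPTmem at hd
      rw [← hj] at hd
      by_cases hne : NEmem net ρ i
      · have hd2 := hne; unfold NEmem at hd2; rw [← hj] at hd2
        rw [if_pos hne, if_pos ⟨hd.1, hd2⟩, if_neg (by omega), add_zero]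
      · have hd2 : ¬ (distOf net ρ.2 j i < aI ρ.1.1 j + xI ρ.1.1 j) := hne
        rw [if_neg hne, if_neg (by omega), if_pos (by omega), zero_add]
    · rw [if_neg (by rw [mem_aoptOf, Equiv.symm_apply_apply]; exact hopt)]
      have hd : ¬ (aI ρ.1.1 j ≤ distOf net ρ.2 j i
          ∧ distOf net ρ.2 j i < aI ρ.1.1 j + xI ρ.1.1 j + bI ρ.1.1 j) := fun hc => hopt hc
      rw [if_neg (by omega), if_neg (by omega), add_zero]
  rw [Finset.sum_congr rfl fun ρ _ => h1 ρ, Fintype.sum_prod_type]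
  have hKj : ∀ (lo hi : ℕ), hi ≤ net.κ j → ∀ c : ℝ,
      (∑ σ : Shift net,
        if (lo ≤ (posZ net j i - σ j).val ∧ (posZ net j i - σ j).val < hi) then c else 0)
      = (((hi - lo) * ∏ l ∈ univ.erase j, net.κ l : ℕ) : ℝ) * c := by
    intro lo hi hhi c
    rw [← Finset.sum_filter, Finset.sum_const, nsmul_eq_mul,
      shift_count net j (posZ net j i) lo hi hhi]
  refine Finset.sum_congr (Finset.univ_eq_attach _) fun t _ => ?_
  rw [Finset.sum_add_distrib]
  congr 1
  · calc (∑ σ : Shift net, if (aI t.1 j ≤ (posZ net j i - σ j).val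
          ∧ (posZ net j i - σ j).val < aI t.1 j + xI t.1 j) then
            (θ t / ((∏ l, net.κ l : ℕ) : ℝ)) * f j (Atj net t.1 j) else 0)
        = (((aI t.1 j + xI t.1 j - aI t.1 j) * ∏ l ∈ univ.erase j, net.κ l : ℕ) : ℝ)
            * ((θ t / ((∏ l, net.κ l : ℕ) : ℝ)) * f j (Atj net t.1 j)) :=
          hKj _ _ (by have := Iset_bounds t j; omega) _
      _ = _ := by
          rw [show aI t.1 j + xI t.1 j - aI t.1 j = xI t.1 j from by omega]
          ring
  · calc (∑ σ : Shift net, if (aI t.1 j + xI t.1 j ≤ (posZ net j i - σ j).val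
          ∧ (posZ net j i - σ j).val < aI t.1 j + xI t.1 j + bI t.1 j) then
            (θ t / ((∏ l, net.κ l : ℕ) : ℝ)) * f j (Atj net t.1 j + 1) else 0)
        = (((aI t.1 j + xI t.1 j + bI t.1 j - (aI t.1 j + xI t.1 j)) * ∏ l ∈ univ.erase j, net.κ l : ℕ) : ℝ)
            * ((θ t / ((∏ l, net.κ l : ℕ) : ℝ)) * f j (Atj net t.1 j + 1)) :=
          hKj _ _ (Iset_bounds t j) _
      _ = _ := by
          rw [show aI t.1 j + xI t.1 j + bI t.1 j - (aI t.1 j + xI t.1 j) = bI t.1 j from by omega]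
          ring

theorem part1 (w : ℕ → ℝ) (net : Network n k) (f : Fin k → ℕ → ℝ)
    (θ : {t : Idx n k // t ∈ Iset n k net.κ} → ℝ) (hθ : PrimalFeasible n k net w f θ) :
    ∃ G : RAGame n, GoodGame G w ∧ ∃ ane, G.IsNash net f ane ∧ G.welf w ane = 1 ∧
      ∃ aopt, G.IsProfile aopt ∧ G.welf w aopt = primalObj n k net.κ w θ := by
  classical
  obtain ⟨hθ0, hθc, hθ1⟩ := hθ
  have hwne : (consG net θ hθ0).welf w (fun i => aneOf net i) = 1 := by
    rw [welf_eq net θ hθ0 w _ AtI (fun ρ => cnt_ne_univ net θ hθ0 ρ)]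
    exact hθ1
  have hwopt : (consG net θ hθ0).welf w (fun i => aoptOf net i) = primalObj n k net.κ w θ := by
    rw [welf_eq net θ hθ0 w _ BtI (fun ρ => cnt_opt_univ net θ hθ0 ρ)]
    rfl
  have hprof_ne : (consG net θ hθ0).IsProfile (fun i => aneOf net i) := by
    intro i
    show aneOf net i ∈ ({aneOf net i, aoptOf net i} : Finset _)
    simp
  have hprof_opt : (consG net θ hθ0).IsProfile (fun i => aoptOf net i) := by
    intro i
    show aoptOf net i ∈ ({aneOf net i, aoptOf net i} : Finset _)
    simp
  refine ⟨consG net θ hθ0, ⟨fun i => aneOf net i, hprof_ne, by rw [hwne]; norm_num⟩,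
    fun i => aneOf net i, ⟨hprof_ne, ?_⟩, hwne, fun i => aoptOf net i, hprof_opt, hwopt⟩
  intro i b hb
  have hb' : b = aneOf net i ∨ b = aoptOf net i := by
    have : b ∈ ({aneOf net i, aoptOf net i} : Finset _) := hb
    simpa using this
  rcases hb' with rfl | rfl
  · rw [show (Function.update (fun i' => aneOf net i') i (aneOf net i))
        = (fun i' => aneOf net i') from Function.update_eq_self i _]
  · rw [util_dev net θ hθ0 f i, util_ne net θ hθ0 f i, ← sub_nonneg, ← Finset.sum_sub_distrib]
    have hterm : ∀ t ∈ (Iset n k net.κ).attach,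
        ((((aI t.1 (net.cls i) + xI t.1 (net.cls i)) * ∏ l ∈ univ.erase (net.cls i), net.κ l : ℕ) : ℝ)
            * (θ t / ((∏ l, net.κ l : ℕ) : ℝ)) * f (net.cls i) (Atj net t.1 (net.cls i))
          - ((((xI t.1 (net.cls i)) * ∏ l ∈ univ.erase (net.cls i), net.κ l : ℕ) : ℝ)
              * (θ t / ((∏ l, net.κ l : ℕ) : ℝ)) * f (net.cls i) (Atj net t.1 (net.cls i))
            + (((bI t.1 (net.cls i)) * ∏ l ∈ univ.erase (net.cls i), net.κ l : ℕ) : ℝ)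
              * (θ t / ((∏ l, net.κ l : ℕ) : ℝ)) * f (net.cls i) (Atj net t.1 (net.cls i) + 1)))
        = (((∏ l ∈ univ.erase (net.cls i), net.κ l : ℕ) : ℝ) / ((∏ l, net.κ l : ℕ) : ℝ))
            * (((aI t.1 (net.cls i) : ℝ) * f (net.cls i) (Atj net t.1 (net.cls i))
              - (bI t.1 (net.cls i) : ℝ) * f (net.cls i) (Atj net t.1 (net.cls i) + 1)) * θ t) := by
      intro t _
      push_cast
      ring
    rw [Finset.sum_congr rfl hterm, ← Finset.mul_sum]
    exact mul_nonneg (div_nonneg (Nat.cast_nonneg _) (Nat.cast_nonneg _)) (hθc (net.cls i))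

theorem welf_bound (hn : 1 ≤ n) (w : ℕ → ℝ) (hw : IsBasis n w) (net : Network n k)
    (f : Fin k → ℕ → ℝ) (hfpos : ∀ j, 0 < f j 1) :
    ∃ M : ℝ, ∀ (G : RAGame n) (ane : Fin n → Finset (Fin G.m)), G.IsNash net f ane →
      G.welf w ane = 1 → ∀ aopt, G.IsProfile aopt → G.welf w aopt ≤ M := by
  classical
  haveI : Nonempty (Fin k) := ⟨net.cls ⟨0, hn⟩⟩
  set wmin : ℝ := (((Finset.Icc 1 n).image w).min'
    (Finset.Nonempty.image ⟨1, by simp [hn]⟩ w)) with hwmin_def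
  have hwmin_pos : 0 < wmin := by
    have hm := Finset.min'_mem ((Finset.Icc 1 n).image w)
      (Finset.Nonempty.image ⟨1, by simp [hn]⟩ w)
    rw [Finset.mem_image] at hm
    obtain ⟨c, hc, hcw⟩ := hm
    rw [Finset.mem_Icc] at hc
    rw [hwmin_def, ← hcw]
    exact hw.2 c hc.1 hc.2
  have hwmin_le : ∀ c, 1 ≤ c → c ≤ n → wmin ≤ w c := fun c h1 h2 =>
    Finset.min'_le _ _ (Finset.mem_image_of_mem w (by simp [h1, h2]))
  set FS : ℝ := ∑ j : Fin k, ∑ c ∈ Finset.range (n + 2), |f j c| with hFS_def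
  have hFS0 : 0 ≤ FS :=
    Finset.sum_nonneg fun j _ => Finset.sum_nonneg fun c _ => abs_nonneg _
  have hFS : ∀ (j : Fin k) (c : ℕ), c ≤ n + 1 → |f j c| ≤ FS := by
    intro j c hc
    calc |f j c| ≤ ∑ c' ∈ Finset.range (n + 2), |f j c'| :=
          Finset.single_le_sum (f := fun c' => |f j c'|) (fun c' _ => abs_nonneg _)
            (Finset.mem_range.mpr (by omega))
      _ ≤ FS := Finset.single_le_sum (f := fun j' => ∑ c' ∈ Finset.range (n + 2), |f j' c'|)
          (fun j' _ => Finset.sum_nonneg fun c' _ => abs_nonneg _) (Finset.mem_univ j)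
  set fmin : ℝ := Finset.univ.inf' Finset.univ_nonempty (fun j : Fin k => f j 1) with hfmin_def
  have hfmin_pos : 0 < fmin := (Finset.lt_inf'_iff _).mpr fun j _ => hfpos j
  have hfmin_le : ∀ j, fmin ≤ f j 1 := fun j => Finset.inf'_le _ (Finset.mem_univ j)
  set wS : ℝ := ∑ c ∈ Finset.range (n + 1), |w c| with hwS_def
  have hwS0 : 0 ≤ wS := Finset.sum_nonneg fun c _ => abs_nonneg _
  have hwS : ∀ c, c ≤ n → w c ≤ wS := by
    intro c hc
    calc w c ≤ |w c| := le_abs_self _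
      _ ≤ wS := Finset.single_le_sum (f := fun c' => |w c'|) (fun c' _ => abs_nonneg _)
          (Finset.mem_range.mpr (by omega))
  set B2 : ℝ := (2 * (FS * (1 / wmin))) / fmin with hB2_def
  refine ⟨wS * (1 / wmin + n * B2), ?_⟩
  intro G ane hnash h1 aopt hopt
  have hv := G.v_nonneg
  have hcnt_le : ∀ (a : Fin n → Finset (Fin G.m)) (S : Finset (Fin n)) r, G.cnt a S r ≤ n :=
    fun a S r => le_trans (Finset.card_filter_le S _)
      (le_trans (Finset.card_le_univ S) (by simp))
  have hwnn : ∀ c, c ≤ n → 0 ≤ w c := by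
    intro c hc
    rcases Nat.eq_zero_or_pos c with rfl | hpos
    · rw [hw.1]
    · exact (hw.2 c hpos hc).le
  set Occ : Finset (Fin G.m) := Finset.univ.filter (fun r => 0 < G.cnt ane Finset.univ r)
    with hOcc_def
  have hOcc : ∑ r ∈ Occ, G.v r ≤ 1 / wmin := by
    rw [le_div_iff₀ hwmin_pos]
    calc (∑ r ∈ Occ, G.v r) * wmin = ∑ r ∈ Occ, G.v r * wmin := by rw [Finset.sum_mul]
      _ ≤ ∑ r ∈ Occ, G.v r * w (G.cnt ane Finset.univ r) := by
          refine Finset.sum_le_sum fun r hr => ?_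
          have hrc : 0 < G.cnt ane Finset.univ r := (Finset.mem_filter.mp hr).2
          exact mul_le_mul_of_nonneg_left (hwmin_le _ hrc (hcnt_le _ _ _)) (hv r)
      _ ≤ ∑ r, G.v r * w (G.cnt ane Finset.univ r) :=
          Finset.sum_le_sum_of_subset_of_nonneg (Finset.filter_subset _ _)
            (fun r _ _ => mul_nonneg (hv r) (hwnn _ (hcnt_le _ _ _)))
      _ = 1 := h1
  have hT : ∀ i : Fin n,
      ∑ r ∈ (aopt i).filter (fun r => G.cnt ane Finset.univ r = 0), G.v r ≤ B2 := by
    intro i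
    set T := ∑ r ∈ (aopt i).filter (fun r => G.cnt ane Finset.univ r = 0), G.v r with hT_def
    have hNashi := hnash.2 i (aopt i) (hopt i)
    have hane_sub : ane i ⊆ Occ := by
      intro r hr
      exact Finset.mem_filter.mpr ⟨Finset.mem_univ r, Finset.card_pos.mpr
        ⟨i, Finset.mem_filter.mpr ⟨Finset.mem_univ i, hr⟩⟩⟩
    have hUup : G.util net f ane i ≤ FS * (1 / wmin) := by
      calc G.util net f ane i
          ≤ ∑ r ∈ ane i, G.v r * FS := by
            refine Finset.sum_le_sum fun r hr => ?_
            exact mul_le_mul_of_nonneg_left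
              (le_trans (le_abs_self _) (hFS (net.cls i) _
                (Nat.le_succ_of_le (hcnt_le ane (net.Nb (net.cls i)) r)))) (hv r)
        _ = FS * ∑ r ∈ ane i, G.v r := by
            rw [Finset.mul_sum]
            exact Finset.sum_congr rfl fun r _ => mul_comm _ _
        _ ≤ FS * ∑ r ∈ Occ, G.v r := mul_le_mul_of_nonneg_left
            (Finset.sum_le_sum_of_subset_of_nonneg hane_sub fun r _ _ => hv r) hFS0
        _ ≤ FS * (1 / wmin) := mul_le_mul_of_nonneg_left hOcc hFS0
    have hiNb : i ∈ net.Nb (net.cls i) := net.mem_Nb i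
    have hUdev : fmin * T - FS * (1 / wmin)
        ≤ G.util net f (Function.update ane i (aopt i)) i := by
      have hsplit : G.util net f (Function.update ane i (aopt i)) i
          = (∑ r ∈ (aopt i).filter (fun r => G.cnt ane Finset.univ r = 0),
              G.v r * f (net.cls i)
                (G.cnt (Function.update ane i (aopt i)) (net.Nb (net.cls i)) r))
            + ∑ r ∈ (aopt i).filter (fun r => ¬ G.cnt ane Finset.univ r = 0),
              G.v r * f (net.cls i)
                (G.cnt (Function.update ane i (aopt i)) (net.Nb (net.cls i)) r) := by
        rw [RAGame.util]
        rw [show (Function.update ane i (aopt i)) i = aopt i from Function.update_self i _ _]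
        rw [← Finset.sum_filter_add_sum_filter_not (aopt i)
          (fun r => G.cnt ane Finset.univ r = 0)]
      rw [hsplit]
      have hp1 : fmin * T ≤ ∑ r ∈ (aopt i).filter (fun r => G.cnt ane Finset.univ r = 0),
          G.v r * f (net.cls i)
            (G.cnt (Function.update ane i (aopt i)) (net.Nb (net.cls i)) r) := by
        rw [hT_def, Finset.mul_sum]
        refine Finset.sum_le_sum fun r hr => ?_
        obtain ⟨hra, hrc⟩ := Finset.mem_filter.mp hr
        have hcnt1 : G.cnt (Function.update ane i (aopt i)) (net.Nb (net.cls i)) r = 1 := by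
          have he1 := cnt_erase G (Function.update ane i (aopt i)) (net.Nb (net.cls i)) i hiNb r
          rw [cnt_update_notmem G ane _ i (Finset.notMem_erase i _) (aopt i) r,
            Function.update_self, if_pos hra] at he1
          have he2 : G.cnt ane ((net.Nb (net.cls i)).erase i) r ≤ G.cnt ane Finset.univ r :=
            Finset.card_le_card (Finset.filter_subset_filter _ (Finset.subset_univ _))
          omega
        rw [hcnt1, mul_comm fmin (G.v r)]
        exact mul_le_mul_of_nonneg_left (hfmin_le (net.cls i)) (hv r)
      have hp2 : -(FS * (1 / wmin)) ≤ ∑ r ∈ (aopt i).filter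
          (fun r => ¬ G.cnt ane Finset.univ r = 0),
          G.v r * f (net.cls i)
            (G.cnt (Function.update ane i (aopt i)) (net.Nb (net.cls i)) r) := by
        have hsub : (aopt i).filter (fun r => ¬ G.cnt ane Finset.univ r = 0) ⊆ Occ := by
          intro r hr
          obtain ⟨_, hrc⟩ := Finset.mem_filter.mp hr
          exact Finset.mem_filter.mpr ⟨Finset.mem_univ r, by omega⟩
        calc -(FS * (1 / wmin)) ≤ -(FS * ∑ r ∈ (aopt i).filter
              (fun r => ¬ G.cnt ane Finset.univ r = 0), G.v r) := by
              refine neg_le_neg (mul_le_mul_of_nonneg_left ?_ hFS0)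
              exact le_trans (Finset.sum_le_sum_of_subset_of_nonneg hsub fun r _ _ => hv r) hOcc
          _ = ∑ r ∈ (aopt i).filter (fun r => ¬ G.cnt ane Finset.univ r = 0),
              -(G.v r * FS) := by
                rw [Finset.mul_sum, ← Finset.sum_neg_distrib]
                exact Finset.sum_congr rfl fun r _ => by ring
          _ ≤ _ := by
              refine Finset.sum_le_sum fun r hr => ?_
              have hfl : -(FS) ≤ f (net.cls i)
                  (G.cnt (Function.update ane i (aopt i)) (net.Nb (net.cls i)) r) := by
                have h5 := hFS (net.cls i)
                  (G.cnt (Function.update ane i (aopt i)) (net.Nb (net.cls i)) r)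
                  (Nat.le_succ_of_le (hcnt_le _ (net.Nb (net.cls i)) r))
                have habs := neg_abs_le (f (net.cls i)
                  (G.cnt (Function.update ane i (aopt i)) (net.Nb (net.cls i)) r))
                linarith
              calc -(G.v r * FS) = G.v r * (-(FS)) := by ring
                _ ≤ G.v r * f (net.cls i)
                    (G.cnt (Function.update ane i (aopt i)) (net.Nb (net.cls i)) r) :=
                  mul_le_mul_of_nonneg_left hfl (hv r)
      linarith
    have hcomb : fmin * T ≤ 2 * (FS * (1 / wmin)) := by
      have := le_trans hUdev (le_trans hNashi hUup)
      linarith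
    rw [hB2_def, le_div_iff₀ hfmin_pos]
    linarith [mul_comm fmin T]
  set OccO : Finset (Fin G.m) := Finset.univ.filter (fun r => 0 < G.cnt aopt Finset.univ r)
    with hOccO_def
  have hsplit2 : G.welf w aopt = ∑ r ∈ OccO, G.v r * w (G.cnt aopt Finset.univ r) := by
    rw [RAGame.welf, ← Finset.sum_filter_add_sum_filter_not Finset.univ
      (fun r => 0 < G.cnt aopt Finset.univ r)]
    have hz : ∑ r ∈ Finset.univ.filter (fun r => ¬ 0 < G.cnt aopt Finset.univ r),
        G.v r * w (G.cnt aopt Finset.univ r) = 0 := by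
      refine Finset.sum_eq_zero fun r hr => ?_
      have hc0 : G.cnt aopt Finset.univ r = 0 := by
        have := (Finset.mem_filter.mp hr).2; omega
      rw [hc0, hw.1, mul_zero]
    rw [hz, add_zero]
  have hstep1 : G.welf w aopt ≤ (∑ r ∈ OccO, G.v r) * wS := by
    rw [hsplit2, Finset.sum_mul]
    refine Finset.sum_le_sum fun r _ => ?_
    exact mul_le_mul_of_nonneg_left (hwS _ (hcnt_le _ _ _)) (hv r)
  have hOccO_split : ∑ r ∈ OccO, G.v r
      = ∑ r ∈ OccO ∩ Occ, G.v r + ∑ r ∈ OccO \ Occ, G.v r :=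
    (Finset.sum_inter_add_sum_sdiff OccO Occ (fun r => G.v r)).symm
  have hpart1 : ∑ r ∈ OccO ∩ Occ, G.v r ≤ 1 / wmin :=
    le_trans (Finset.sum_le_sum_of_subset_of_nonneg (Finset.inter_subset_right)
      fun r _ _ => hv r) hOcc
  have hpart2 : ∑ r ∈ OccO \ Occ, G.v r ≤ (n : ℝ) * B2 := by
    have hstep : ∀ r ∈ OccO \ Occ, G.v r ≤ ∑ i : Fin n, if r ∈ aopt i then G.v r else 0 := by
      intro r hr
      have hrc : 0 < G.cnt aopt Finset.univ r :=
        (Finset.mem_filter.mp (Finset.mem_sdiff.mp hr).1).2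
      have hvc : G.v r * 1 ≤ G.v r * (G.cnt aopt Finset.univ r : ℝ) :=
        mul_le_mul_of_nonneg_left (by exact_mod_cast hrc) (hv r)
      calc G.v r = G.v r * 1 := by ring
        _ ≤ G.v r * (G.cnt aopt Finset.univ r : ℝ) := hvc
        _ = ∑ i : Fin n, if r ∈ aopt i then G.v r else 0 := by
            rw [RAGame.cnt, Finset.card_filter]
            push_cast
            rw [Finset.mul_sum]
            exact Finset.sum_congr rfl fun i _ => by
              by_cases h : r ∈ aopt i <;> simp [h]
    calc ∑ r ∈ OccO \ Occ, G.v r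
        ≤ ∑ r ∈ OccO \ Occ, ∑ i : Fin n, if r ∈ aopt i then G.v r else 0 :=
          Finset.sum_le_sum hstep
      _ = ∑ i : Fin n, ∑ r ∈ OccO \ Occ, if r ∈ aopt i then G.v r else 0 := Finset.sum_comm
      _ ≤ ∑ _i : Fin n, B2 := by
          refine Finset.sum_le_sum fun i _ => ?_
          rw [← Finset.sum_filter]
          refine le_trans (Finset.sum_le_sum_of_subset_of_nonneg ?_ fun r _ _ => hv r) (hT i)
          intro r hr
          obtain ⟨hrD, hra⟩ := Finset.mem_filter.mp hr
          have hnot : r ∉ Occ := (Finset.mem_sdiff.mp hrD).2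
          refine Finset.mem_filter.mpr ⟨hra, ?_⟩
          by_contra hc
          exact hnot (Finset.mem_filter.mpr ⟨Finset.mem_univ r, by omega⟩)
      _ = (n : ℝ) * B2 := by rw [Finset.sum_const, Finset.card_univ]; simp [nsmul_eq_mul]
  calc G.welf w aopt ≤ (∑ r ∈ OccO, G.v r) * wS := hstep1
    _ ≤ (1 / wmin + n * B2) * wS := by
        rw [hOccO_split]
        exact mul_le_mul_of_nonneg_right (by linarith) hwS0
    _ = wS * (1 / wmin + n * B2) := mul_comm _ _

lemma welf_nonneg (w : ℕ → ℝ) (hw : IsBasis n w) (G : RAGame n)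
    (a : Fin n → Finset (Fin G.m)) : 0 ≤ G.welf w a := by
  refine Finset.sum_nonneg fun r _ => mul_nonneg (G.v_nonneg r) ?_
  have hc : G.cnt a Finset.univ r ≤ n :=
    le_trans (Finset.card_filter_le _ _) (by simp)
  rcases Nat.eq_zero_or_pos (G.cnt a Finset.univ r) with h0 | hpos
  · rw [h0, hw.1]
  · exact (hw.2 _ hpos hc).le

end
end L2Aux

/-- Lemma 2: every primal-feasible `θ` is realized by a game of `𝓖` with a
pure Nash equilibrium of welfare `1` and a profile of welfare equal to the LP objective;
consequently the supremum over such games dominates the primal LP value `W*`. -/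
theorem feasible_theta_realized_by_game {n k : ℕ} (hn : 1 ≤ n) (w : ℕ → ℝ)
    (hw : IsBasis n w) (net : Network n k) (f : Fin k → ℕ → ℝ) (hf : IsMech net f)
    (hfpos : ∀ j, 0 < f j 1) :
    (∀ θ, PrimalFeasible n k net w f θ →
      ∃ G : RAGame n, GoodGame G w ∧
        ∃ ane, G.IsNash net f ane ∧ G.welf w ane = 1 ∧
          ∃ aopt, G.IsProfile aopt ∧ G.welf w aopt = primalObj n k net.κ w θ) ∧
    sSup (PrimalVals n k net w f) ≤
      sSup {x | ∃ G : RAGame n, GoodGame G w ∧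
        ∃ ane, G.IsNash net f ane ∧ G.welf w ane = 1 ∧
          ∃ aopt, G.IsProfile aopt ∧ x = G.welf w aopt} := by
  have hpart1 : ∀ θ, PrimalFeasible n k net w f θ →
      ∃ G : RAGame n, GoodGame G w ∧
        ∃ ane, G.IsNash net f ane ∧ G.welf w ane = 1 ∧
          ∃ aopt, G.IsProfile aopt ∧ G.welf w aopt = primalObj n k net.κ w θ :=
    fun θ hθ => L2Aux.part1 w net f θ hθ
  refine ⟨hpart1, ?_⟩
  obtain ⟨M, hM⟩ := L2Aux.welf_bound hn w hw net f hfpos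
  have hbdd : BddAbove {x | ∃ G : RAGame n, GoodGame G w ∧
      ∃ ane, G.IsNash net f ane ∧ G.welf w ane = 1 ∧
        ∃ aopt, G.IsProfile aopt ∧ x = G.welf w aopt} := by
    refine ⟨M, ?_⟩
    rintro x ⟨G, hG, ane, hnash, h1, aopt, hprof, rfl⟩
    exact hM G ane hnash h1 aopt hprof
  have hsub : PrimalVals n k net w f ⊆ {x | ∃ G : RAGame n, GoodGame G w ∧
      ∃ ane, G.IsNash net f ane ∧ G.welf w ane = 1 ∧
        ∃ aopt, G.IsProfile aopt ∧ x = G.welf w aopt} := by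
    rintro x ⟨θ, hfeas, rfl⟩
    obtain ⟨G, hG, ane, hnash, h1, aopt, hprof, hwopt⟩ := hpart1 θ hfeas
    exact ⟨G, hG, ane, hnash, h1, aopt, hprof, hwopt.symm⟩
  rcases Set.eq_empty_or_nonempty (PrimalVals n k net w f) with he | hne
  · rw [he, Real.sSup_empty]
    refine Real.sSup_nonneg fun x hx => ?_
    obtain ⟨G, hG, ane, hnash, h1, aopt, hprof, rfl⟩ := hx
    exact L2Aux.welf_nonneg w hw G aopt
  · exact csSup_le_csSup hbdd hne hsub
end

section
/- (Constraint reduction from 𝓘 to 𝓘_R.) Fix n, a basis function w with w(0) = 0, a network (𝓒,𝓝), and a mechanism f = (f_1,…,f_k) with f_j(0) = f_j(|𝓝_j|+1) = 0. Let λ_1,…,λ_k ≥ 0 and μ ∈ ℝ. Then the family of inequalities w(B_t) + Σ_{j=1}^k λ_j [a_j f_j(A_{t,j}) − b_j f_j(A_{t,j}+1)] ≤ μ · w(A_t) holds for all t ∈ 𝓘 if and only if it holds for all t ∈ 𝓘_R. -/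
open Finset

section ConstraintReductionAux

variable {n k : ℕ}

private lemma κ_sum (net : Network n k) : ∑ j, net.κ j = n := by
  classical
  have h := Finset.card_eq_sum_card_fiberwise
    (f := net.cls) (s := (Finset.univ : Finset (Fin n))) (t := (Finset.univ : Finset (Fin k)))
    (fun x _ => Finset.mem_univ _)
  simp only [Finset.card_univ, Fintype.card_fin] at h
  simpa [Network.κ, Network.classSet] using h.symm

private lemma κ_le (net : Network n k) (j : Fin k) : net.κ j ≤ n := by
  have h := Finset.card_filter_le (Finset.univ : Finset (Fin n)) (fun i => net.cls i = j)
  simpa [Network.κ, Network.classSet] using h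

private lemma ax_update (t : Idx n k) (j : Fin k) (p : Fin (n+1) × Fin (n+1) × Fin (n+1))
    (ha : (p.1 : ℕ) + (p.2.1 : ℕ) = aI t j + xI t j) :
    ∀ l, aI (Function.update t j p) l + xI (Function.update t j p) l = aI t l + xI t l := by
  intro l
  rcases eq_or_ne l j with rfl | hlj
  · simpa [aI, xI] using ha
  · simp [aI, xI, Function.update_of_ne hlj]

private lemma bx_update (t : Idx n k) (j : Fin k) (p : Fin (n+1) × Fin (n+1) × Fin (n+1))
    (hb : (p.2.2 : ℕ) + (p.2.1 : ℕ) = bI t j + xI t j) :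
    ∀ l, bI (Function.update t j p) l + xI (Function.update t j p) l = bI t l + xI t l := by
  intro l
  rcases eq_or_ne l j with rfl | hlj
  · simpa [bI, xI] using hb
  · simp [bI, xI, Function.update_of_ne hlj]

private lemma AtI_update (t : Idx n k) (j : Fin k) (p : Fin (n+1) × Fin (n+1) × Fin (n+1))
    (ha : (p.1 : ℕ) + (p.2.1 : ℕ) = aI t j + xI t j) :
    AtI (Function.update t j p) = AtI t := by
  unfold AtI
  exact Finset.sum_congr rfl fun l _ => ax_update t j p ha l

private lemma BtI_update (t : Idx n k) (j : Fin k) (p : Fin (n+1) × Fin (n+1) × Fin (n+1))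
    (hb : (p.2.2 : ℕ) + (p.2.1 : ℕ) = bI t j + xI t j) :
    BtI (Function.update t j p) = BtI t := by
  unfold BtI
  exact Finset.sum_congr rfl fun l _ => bx_update t j p hb l

private lemma Atj_update (net : Network n k) (t : Idx n k) (j : Fin k)
    (p : Fin (n+1) × Fin (n+1) × Fin (n+1))
    (ha : (p.1 : ℕ) + (p.2.1 : ℕ) = aI t j + xI t j) (l : Fin k) :
    Atj net (Function.update t j p) l = Atj net t l := by
  unfold Atj
  exact Finset.sum_congr rfl fun l' _ => ax_update t j p ha l'

private lemma triple_sum_update (t : Idx n k) (j : Fin k)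
    (p : Fin (n+1) × Fin (n+1) × Fin (n+1)) :
    (∑ l, (aI (Function.update t j p) l + xI (Function.update t j p) l
        + bI (Function.update t j p) l)) + (aI t j + xI t j + bI t j)
    = (∑ l, (aI t l + xI t l + bI t l)) + ((p.1 : ℕ) + (p.2.1 : ℕ) + (p.2.2 : ℕ)) := by
  classical
  rw [← Finset.sum_erase_add Finset.univ _ (Finset.mem_univ j),
      ← Finset.sum_erase_add Finset.univ (fun l => aI t l + xI t l + bI t l)
        (Finset.mem_univ j)]
  have hoff : ∀ l ∈ Finset.univ.erase j,
      aI (Function.update t j p) l + xI (Function.update t j p) l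
        + bI (Function.update t j p) l = aI t l + xI t l + bI t l := by
    intro l hl
    have hlj := Finset.ne_of_mem_erase hl
    simp [aI, xI, bI, Function.update_of_ne hlj]
  rw [Finset.sum_congr rfl hoff]
  simp only [aI, xI, bI, Function.update_self]
  omega

private lemma dual_sum_update (net : Network n k) (f : Fin k → ℕ → ℝ) (lam : Fin k → ℝ)
    (t : Idx n k) (j : Fin k) (p : Fin (n+1) × Fin (n+1) × Fin (n+1))
    (ha : (p.1 : ℕ) + (p.2.1 : ℕ) = aI t j + xI t j) :
    ∑ l, lam l * ((aI (Function.update t j p) l : ℝ)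
          * f l (Atj net (Function.update t j p) l)
        - (bI (Function.update t j p) l : ℝ)
          * f l (Atj net (Function.update t j p) l + 1))
    = (∑ l, lam l * ((aI t l : ℝ) * f l (Atj net t l)
          - (bI t l : ℝ) * f l (Atj net t l + 1)))
      - lam j * ((aI t j : ℝ) * f j (Atj net t j) - (bI t j : ℝ) * f j (Atj net t j + 1))
      + lam j * (((p.1 : ℕ) : ℝ) * f j (Atj net t j)
          - ((p.2.2 : ℕ) : ℝ) * f j (Atj net t j + 1)) := by
  classical
  rw [← Finset.sum_erase_add Finset.univ _ (Finset.mem_univ j),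
      ← Finset.sum_erase_add Finset.univ
        (fun l => lam l * ((aI t l : ℝ) * f l (Atj net t l)
          - (bI t l : ℝ) * f l (Atj net t l + 1))) (Finset.mem_univ j)]
  have hAtj := Atj_update net t j p ha
  have hoff : ∀ l ∈ Finset.univ.erase j,
      lam l * ((aI (Function.update t j p) l : ℝ)
          * f l (Atj net (Function.update t j p) l)
        - (bI (Function.update t j p) l : ℝ)
          * f l (Atj net (Function.update t j p) l + 1))
      = lam l * ((aI t l : ℝ) * f l (Atj net t l)
          - (bI t l : ℝ) * f l (Atj net t l + 1)) := by
    intro l hl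
    have hlj := Finset.ne_of_mem_erase hl
    simp [aI, bI, Function.update_of_ne hlj, hAtj]
  rw [Finset.sum_congr rfl hoff]
  simp only [aI, bI, Function.update_self, hAtj]
  ring

end ConstraintReductionAux

set_option maxHeartbeats 1000000 in
/-- the dual constraints hold for all `t ∈ 𝓘` iff they hold for all
`t ∈ 𝓘_R`. -/
theorem constraint_reduction {n k : ℕ} (hn : 1 ≤ n) (w : ℕ → ℝ) (hw : IsBasis n w)
    (net : Network n k) (f : Fin k → ℕ → ℝ) (hf : IsMech net f)
    (lam : Fin k → ℝ) (hlam : ∀ j, 0 ≤ lam j) (μ : ℝ) :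
    (∀ t ∈ Iset n k net.κ, DualConstr net w f lam μ t) ↔
      (∀ t ∈ IRset n k net.κ, DualConstr net w f lam μ t) := by
  classical
  constructor
  · intro h t ht
    exact h t (Finset.mem_filter.mp ht).1
  · intro h
    suffices H : ∀ m : ℕ, ∀ t ∈ Iset n k net.κ,
        (Finset.univ.filter fun j => ¬(aI t j * xI t j * bI t j = 0 ∨
          aI t j + xI t j + bI t j = net.κ j)).card ≤ m → DualConstr net w f lam μ t by
      intro t ht
      exact H _ t ht le_rfl
    intro m
    induction m with
    | zero =>
      intro t ht hc
      apply h
      rw [IRset, Finset.mem_filter]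
      refine ⟨ht, fun j => ?_⟩
      by_contra hj
      have hmem : j ∈ Finset.univ.filter fun j => ¬(aI t j * xI t j * bI t j = 0 ∨
          aI t j + xI t j + bI t j = net.κ j) :=
        Finset.mem_filter.mpr ⟨Finset.mem_univ _, hj⟩
      have := Finset.card_pos.mpr ⟨j, hmem⟩
      omega
    | succ m ih =>
      intro t ht hc
      by_cases hle : (Finset.univ.filter fun j => ¬(aI t j * xI t j * bI t j = 0 ∨
          aI t j + xI t j + bI t j = net.κ j)).card ≤ m
      · exact ih t ht hle
      have hcard : (Finset.univ.filter fun j => ¬(aI t j * xI t j * bI t j = 0 ∨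
          aI t j + xI t j + bI t j = net.κ j)).card = m + 1 := le_antisymm hc (by omega)
      obtain ⟨j, hj⟩ : (Finset.univ.filter fun j => ¬(aI t j * xI t j * bI t j = 0 ∨
          aI t j + xI t j + bI t j = net.κ j)).Nonempty :=
        Finset.card_pos.mp (by omega)
      have hjbad := (Finset.mem_filter.mp hj).2
      push_neg at hjbad
      obtain ⟨hprod, hsumκ⟩ := hjbad
      have htI := ht
      rw [Iset, Finset.mem_filter] at htI
      obtain ⟨-, h1, h2, h3⟩ := htI
      have h1j := h1 j
      have hκn := κ_le net j
      have ha0 : 0 < aI t j := Nat.pos_of_ne_zero (by intro h0; exact hprod (by simp [h0]))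
      have hx0 : 0 < xI t j := Nat.pos_of_ne_zero (by intro h0; exact hprod (by simp [h0]))
      have hb0 : 0 < bI t j := Nat.pos_of_ne_zero (by intro h0; exact hprod (by simp [h0]))
      have hlt : aI t j + xI t j + bI t j < net.κ j := lt_of_le_of_ne h1j hsumκ
      set d := min (aI t j) (bI t j) with hd
      set u := min (xI t j) (net.κ j - (aI t j + xI t j + bI t j)) with hu
      have hd0 : 0 < d := by omega
      have hu0 : 0 < u := by omega
      have hda : d ≤ aI t j := by omega
      have hdb : d ≤ bI t j := by omega
      have hux : u ≤ xI t j := by omega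
      -- the two modified tuples
      set pD : Fin (n+1) × Fin (n+1) × Fin (n+1) :=
        (⟨aI t j - d, by omega⟩, ⟨xI t j + d, by omega⟩, ⟨bI t j - d, by omega⟩) with hpD
      set pU : Fin (n+1) × Fin (n+1) × Fin (n+1) :=
        (⟨aI t j + u, by omega⟩, ⟨xI t j - u, by omega⟩, ⟨bI t j + u, by omega⟩) with hpU
      set tD := Function.update t j pD with htDdef
      set tU := Function.update t j pU with htUdef
      have hpaD : (pD.1 : ℕ) + (pD.2.1 : ℕ) = aI t j + xI t j := by simp [hpD]; omega
      have hpbD : (pD.2.2 : ℕ) + (pD.2.1 : ℕ) = bI t j + xI t j := by simp [hpD]; omega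
      have hpaU : (pU.1 : ℕ) + (pU.2.1 : ℕ) = aI t j + xI t j := by simp [hpU]; omega
      have hpbU : (pU.2.2 : ℕ) + (pU.2.1 : ℕ) = bI t j + xI t j := by simp [hpU]; omega
      -- component values
      have eaD : aI tD j = aI t j - d := by simp [htDdef, aI, hpD]
      have exD : xI tD j = xI t j + d := by simp [htDdef, xI, hpD]
      have ebD : bI tD j = bI t j - d := by simp [htDdef, bI, hpD]
      have eaU : aI tU j = aI t j + u := by simp [htUdef, aI, hpU]
      have exU : xI tU j = xI t j - u := by simp [htUdef, xI, hpU]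
      have ebU : bI tU j = bI t j + u := by simp [htUdef, bI, hpU]
      have ene : ∀ l, l ≠ j → aI tD l = aI t l ∧ xI tD l = xI t l ∧ bI tD l = bI t l ∧
          aI tU l = aI t l ∧ xI tU l = xI t l ∧ bI tU l = bI t l := by
        intro l hlj
        simp [htDdef, htUdef, aI, xI, bI, Function.update_of_ne hlj]
      -- sums of triples
      have hSD := triple_sum_update t j pD
      have hSU := triple_sum_update t j pU
      rw [← htDdef] at hSD
      rw [← htUdef] at hSU
      simp only [hpD] at hSD
      simp only [hpU] at hSU
      have hsingD : aI tD j + xI tD j + bI tD j ≤ ∑ l, (aI tD l + xI tD l + bI tD l) :=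
        Finset.single_le_sum (f := fun l => aI tD l + xI tD l + bI tD l)
          (fun l _ => Nat.zero_le _) (Finset.mem_univ j)
      have hsingU : aI tU j + xI tU j + bI tU j ≤ ∑ l, (aI tU l + xI tU l + bI tU l) :=
        Finset.single_le_sum (f := fun l => aI tU l + xI tU l + bI tU l)
          (fun l _ => Nat.zero_le _) (Finset.mem_univ j)
      -- membership of tD
      have hmemD : tD ∈ Iset n k net.κ := by
        rw [Iset, Finset.mem_filter]
        refine ⟨Finset.mem_univ _, fun l => ?_, ?_, ?_⟩
        · rcases eq_or_ne l j with rfl | hlj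
          · rw [eaD, exD, ebD]; omega
          · obtain ⟨e1, e2, e3, -⟩ := ene l hlj
            rw [e1, e2, e3]; exact h1 l
        · rw [eaD, exD, ebD] at hsingD; omega
        · omega
      -- membership of tU
      have hmemU : tU ∈ Iset n k net.κ := by
        rw [Iset, Finset.mem_filter]
        have hper : ∀ l, aI tU l + xI tU l + bI tU l ≤ net.κ l := by
          intro l
          rcases eq_or_ne l j with rfl | hlj
          · rw [eaU, exU, ebU]; omega
          · obtain ⟨-, -, -, e1, e2, e3⟩ := ene l hlj
            rw [e1, e2, e3]; exact h1 l
        refine ⟨Finset.mem_univ _, hper, ?_, ?_⟩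
        · rw [eaU, exU, ebU] at hsingU; omega
        · calc ∑ l, (aI tU l + xI tU l + bI tU l) ≤ ∑ l, net.κ l :=
                Finset.sum_le_sum fun l _ => hper l
            _ = n := κ_sum net
      -- badness decreases
      have hbad : ∀ (t' : Idx n k), (∀ l, l ≠ j → aI t' l = aI t l ∧ xI t' l = xI t l ∧
            bI t' l = bI t l) →
          (aI t' j * xI t' j * bI t' j = 0 ∨ aI t' j + xI t' j + bI t' j = net.κ j) →
          (Finset.univ.filter fun l => ¬(aI t' l * xI t' l * bI t' l = 0 ∨
            aI t' l + xI t' l + bI t' l = net.κ l)).card ≤ m := by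
        intro t' hne hjgood
        have hsub : (Finset.univ.filter fun l => ¬(aI t' l * xI t' l * bI t' l = 0 ∨
            aI t' l + xI t' l + bI t' l = net.κ l)) ⊆
            (Finset.univ.filter fun l => ¬(aI t l * xI t l * bI t l = 0 ∨
              aI t l + xI t l + bI t l = net.κ l)).erase j := by
          intro l hl
          have hl' := (Finset.mem_filter.mp hl).2
          have hlj : l ≠ j := by
            rintro rfl
            exact hl' hjgood
          obtain ⟨e1, e2, e3⟩ := hne l hlj
          rw [e1, e2, e3] at hl'
          exact Finset.mem_erase.mpr ⟨hlj, Finset.mem_filter.mpr ⟨Finset.mem_univ _, hl'⟩⟩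
        calc _ ≤ _ := Finset.card_le_card hsub
          _ ≤ m := by rw [Finset.card_erase_of_mem hj, hcard]; omega
      have hbadD := hbad tD (fun l hlj => ⟨(ene l hlj).1, (ene l hlj).2.1, (ene l hlj).2.2.1⟩)
        (by rw [eaD, exD, ebD]
            left
            have : aI t j - d = 0 ∨ bI t j - d = 0 := by omega
            rcases this with h0 | h0 <;> simp [h0])
      have hbadU := hbad tU
        (fun l hlj => ⟨(ene l hlj).2.2.2.1, (ene l hlj).2.2.2.2.1, (ene l hlj).2.2.2.2.2⟩)
        (by rw [eaU, exU, ebU]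
            have : xI t j - u = 0 ∨ aI t j + u + (xI t j - u) + (bI t j + u) = net.κ j := by
              omega
            rcases this with h0 | h0
            · left; simp [h0]
            · right; omega)
      -- the two constraints
      have hcD := ih tD hmemD hbadD
      have hcU := ih tU hmemU hbadU
      unfold DualConstr at hcD hcU ⊢
      rw [htDdef, AtI_update t j pD hpaD, BtI_update t j pD hpbD,
        dual_sum_update net f lam t j pD hpaD] at hcD
      rw [htUdef, AtI_update t j pU hpaU, BtI_update t j pU hpbU,
        dual_sum_update net f lam t j pU hpaU] at hcU
      simp only [hpD, Fin.val_mk] at hcD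
      simp only [hpU, Fin.val_mk] at hcU
      rw [Nat.cast_sub hda, Nat.cast_sub hdb] at hcD
      push_cast at hcU
      set F := f j (Atj net t j)
      set F' := f j (Atj net t j + 1)
      set S := ∑ l, lam l * ((aI t l : ℝ) * f l (Atj net t l)
        - (bI t l : ℝ) * f l (Atj net t l + 1))
      set R := μ * w (AtI t)
      have hdR : (0 : ℝ) < d := by exact_mod_cast hd0
      have huR : (0 : ℝ) < u := by exact_mod_cast hu0
      have key : ((u : ℝ) + d) * (w (BtI t) + S) ≤ ((u : ℝ) + d) * R := by
        nlinarith [mul_le_mul_of_nonneg_left hcD huR.le, mul_le_mul_of_nonneg_left hcU hdR.le]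
      exact le_of_mul_le_mul_left key (by positivity)
end
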